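/- arXiv:1908.09161 — 5 statements merged into one kernel-verified Lean document; each statement's English description precedes it below -/
import Mathlib

section
/- Let ξ : ℤ≥0 → ℂ be a Wiener sequence with correlations ρ(k) = lim_{n→∞} (1/n) ∑_{0 ≤ s < n} ξ(s) conj(ξ(s+k)), extended by ρ(-k) = conj(ρ(k)). Then ρ is positive semi-definite: for all m ≥ 0 and all complex numbers c_0, …, c_m, the sum ∑_{0 ≤ j,k ≤ m} c_j · conj(c_k) · ρ(k−j) is a nonnegative real number. -/
open Filter Finset ComplexConjugate

private lemma aux_normSq_div (ξ : ℕ → ℂ) (L : ℝ)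
    (hA : Tendsto (fun n : ℕ => (n : ℝ)⁻¹ * ∑ s ∈ Finset.range n, Complex.normSq (ξ s))
      atTop (nhds L)) :
    Tendsto (fun n : ℕ => (n : ℝ)⁻¹ * Complex.normSq (ξ n)) atTop (nhds 0) := by
  set A : ℕ → ℝ := fun n => (n : ℝ)⁻¹ * ∑ s ∈ Finset.range n, Complex.normSq (ξ s) with hAdef
  have hB : ∀ n : ℕ, (n : ℝ) * A n = ∑ s ∈ Finset.range n, Complex.normSq (ξ s) := by
    intro n
    rcases Nat.eq_zero_or_pos n with h | h
    · simp [h, hAdef]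
    · have : (n : ℝ) ≠ 0 := by positivity
      simp only [hAdef]
      field_simp
  -- first: (n+1)⁻¹ * normSq (ξ n) → 0
  have h1 : Tendsto (fun n : ℕ => ((n : ℝ) + 1)⁻¹ * Complex.normSq (ξ n)) atTop (nhds 0) := by
    have hA1 : Tendsto (fun n : ℕ => A (n + 1)) atTop (nhds L) :=
      hA.comp (tendsto_add_atTop_nat 1)
    have hinv : Tendsto (fun n : ℕ => ((n : ℝ) + 1)⁻¹) atTop (nhds 0) := by
      have := (tendsto_inv_atTop_nhds_zero_nat (𝕜 := ℝ)).comp (tendsto_add_atTop_nat 1)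
      apply this.congr
      intro n
      simp [Function.comp]
    have hsmall : Tendsto (fun n : ℕ => ((n : ℝ) + 1)⁻¹ * A n) atTop (nhds (0 * L)) :=
      hinv.mul hA
    have hcomb : Tendsto (fun n : ℕ => A (n + 1) - A n + ((n : ℝ) + 1)⁻¹ * A n)
        atTop (nhds (L - L + 0 * L)) := (hA1.sub hA).add hsmall
    have heq : ∀ n : ℕ, A (n + 1) - A n + ((n : ℝ) + 1)⁻¹ * A n
        = ((n : ℝ) + 1)⁻¹ * Complex.normSq (ξ n) := by
      intro n
      have e1 : ((n : ℝ) + 1) * A (n + 1) = (n : ℝ) * A n + Complex.normSq (ξ n) := by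
        have := hB (n + 1)
        rw [Finset.sum_range_succ, ← hB n] at this
        push_cast at this
        linarith
      have hne : ((n : ℝ) + 1) ≠ 0 := by positivity
      field_simp
      nlinarith [e1]
    simpa [heq, funext heq] using hcomb.congr heq
  -- then: n⁻¹ * normSq (ξ n) → 0
  have hone : Tendsto (fun n : ℕ => (1 + (n : ℝ)⁻¹)) atTop (nhds (1 + 0)) :=
    tendsto_const_nhds.add (tendsto_inv_atTop_nhds_zero_nat (𝕜 := ℝ))
  have := hone.mul h1
  rw [show (1 + (0:ℝ)) * 0 = 0 by ring] at this
  apply this.congr'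
  filter_upwards [eventually_ge_atTop 1] with n hn
  have hne : (n : ℝ) ≠ 0 := by positivity
  have hne1 : (n : ℝ) + 1 ≠ 0 := by positivity
  field_simp

/-- The correlations of a Wiener sequence form a positive semi-definite function. -/
theorem wiener_correlations_posSemidef (ξ : ℕ → ℂ) (ρ : ℤ → ℂ)
    (hW : ∀ k : ℕ, Tendsto
      (fun n : ℕ => (n : ℂ)⁻¹ * ∑ s ∈ Finset.range n, ξ s * conj (ξ (s + k)))
      atTop (nhds (ρ (k : ℤ))))
    (hneg : ∀ k : ℕ, ρ (-(k : ℤ)) = conj (ρ (k : ℤ))) :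
    ∀ (m : ℕ) (c : ℕ → ℂ),
      0 ≤ (∑ j ∈ Finset.range (m + 1), ∑ k ∈ Finset.range (m + 1),
            c j * conj (c k) * ρ ((k : ℤ) - (j : ℤ))).re ∧
      (∑ j ∈ Finset.range (m + 1), ∑ k ∈ Finset.range (m + 1),
            c j * conj (c k) * ρ ((k : ℤ) - (j : ℤ))).im = 0 := by
  -- Step 1: (1/n) normSq (ξ n) → 0
  have hA : Tendsto (fun n : ℕ => (n : ℝ)⁻¹ * ∑ s ∈ Finset.range n, Complex.normSq (ξ s))
      atTop (nhds (ρ 0).re) := by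
    have h0 := hW 0
    have heq : ∀ n : ℕ, ((n : ℂ)⁻¹ * ∑ s ∈ Finset.range n, ξ s * conj (ξ (s + 0)))
        = ((n : ℝ)⁻¹ * ∑ s ∈ Finset.range n, Complex.normSq (ξ s) : ℂ) := by
      intro n
      have : ∀ s : ℕ, ξ s * conj (ξ (s + 0)) = (Complex.normSq (ξ s) : ℂ) := by
        intro s; rw [Nat.add_zero, Complex.mul_conj]
      simp only [this]
      push_cast
      ring
    have h0' : Tendsto (fun n : ℕ =>
        ((n : ℝ)⁻¹ * ∑ s ∈ Finset.range n, Complex.normSq (ξ s) : ℂ)) atTop (nhds (ρ 0)) :=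
      h0.congr heq
    have := (Complex.continuous_re.tendsto _).comp h0'
    apply this.congr
    intro n
    simp [Function.comp]
  have hsq : Tendsto (fun n : ℕ => (n : ℝ)⁻¹ * Complex.normSq (ξ n)) atTop (nhds 0) :=
    aux_normSq_div ξ _ hA
  -- Step 2: for each a, (1/n) normSq (ξ (n+a)) → 0
  have hsq' : ∀ a : ℕ,
      Tendsto (fun n : ℕ => (n : ℝ)⁻¹ * Complex.normSq (ξ (n + a))) atTop (nhds 0) := by
    intro a
    have h1 : Tendsto (fun n : ℕ => ((n + a : ℕ) : ℝ)⁻¹ * Complex.normSq (ξ (n + a)))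
        atTop (nhds 0) := hsq.comp (tendsto_add_atTop_nat a)
    have hone : Tendsto (fun n : ℕ => (1 + (a : ℝ) * (n : ℝ)⁻¹)) atTop (nhds (1 + (a : ℝ) * 0)) :=
      tendsto_const_nhds.add (tendsto_const_nhds.mul (tendsto_inv_atTop_nhds_zero_nat (𝕜 := ℝ)))
    have := hone.mul h1
    rw [show (1 + (a : ℝ) * 0) * 0 = 0 by ring] at this
    apply this.congr'
    filter_upwards [eventually_ge_atTop 1] with n hn
    have hne : (n : ℝ) ≠ 0 := by positivity
    have hne2 : ((n : ℝ) + a) ≠ 0 := by positivity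
    push_cast
    field_simp
  -- Step 3: for each a b, (1/n) ξ(n+a) conj ξ(n+b) → 0 in ℂ
  have hterm : ∀ a b : ℕ,
      Tendsto (fun n : ℕ => (n : ℂ)⁻¹ * (ξ (n + a) * conj (ξ (n + b)))) atTop (nhds 0) := by
    intro a b
    apply squeeze_zero_norm (a := fun n : ℕ =>
      ((n : ℝ)⁻¹ * Complex.normSq (ξ (n + a)) + (n : ℝ)⁻¹ * Complex.normSq (ξ (n + b))) / 2)
    · intro n
      have h1 : ‖(n : ℂ)⁻¹ * (ξ (n + a) * conj (ξ (n + b)))‖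
          = (n : ℝ)⁻¹ * (‖ξ (n + a)‖ * ‖ξ (n + b)‖) := by
        simp [norm_mul]
      rw [h1, Complex.normSq_eq_norm_sq, Complex.normSq_eq_norm_sq]
      have hn : (0:ℝ) ≤ (n : ℝ)⁻¹ := by positivity
      have habs : ‖ξ (n + a)‖ * ‖ξ (n + b)‖
          ≤ (‖ξ (n + a)‖ ^ 2 + ‖ξ (n + b)‖ ^ 2) / 2 := by
        nlinarith [sq_nonneg (‖ξ (n + a)‖ - ‖ξ (n + b)‖)]
      calc (n : ℝ)⁻¹ * (‖ξ (n + a)‖ * ‖ξ (n + b)‖)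
          ≤ (n : ℝ)⁻¹ * ((‖ξ (n + a)‖ ^ 2 + ‖ξ (n + b)‖ ^ 2) / 2) :=
            mul_le_mul_of_nonneg_left habs hn
        _ = ((n : ℝ)⁻¹ * ‖ξ (n + a)‖ ^ 2
              + (n : ℝ)⁻¹ * ‖ξ (n + b)‖ ^ 2) / 2 := by
            ring
    · have := ((hsq' a).add (hsq' b)).div_const 2
      simpa using this
  -- Step 4: shift lemma for j ≤ k
  have hshift_le : ∀ j k : ℕ, j ≤ k →
      Tendsto (fun n : ℕ => (n : ℂ)⁻¹ * ∑ s ∈ Finset.range n, ξ (s + j) * conj (ξ (s + k)))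
        atTop (nhds (ρ ((k : ℤ) - (j : ℤ)))) := by
    intro j k hjk
    obtain ⟨d, rfl⟩ := Nat.exists_eq_add_of_le hjk
    have hd : (((j + d : ℕ) : ℤ)) - (j : ℤ) = (d : ℤ) := by push_cast; ring
    rw [hd]
    set f : ℕ → ℂ := fun s => ξ s * conj (ξ (s + d)) with hf
    have key : ∀ n : ℕ, (∑ s ∈ Finset.range n, ξ (s + j) * conj (ξ (s + (j + d))))
        = (∑ s ∈ Finset.range n, f s) + (∑ i ∈ Finset.range j, f (n + i))
          - ∑ s ∈ Finset.range j, f s := by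
      intro n
      have h1 : ∑ x ∈ Finset.range (j + n), f x
          = (∑ x ∈ Finset.range j, f x) + ∑ x ∈ Finset.range n, f (j + x) :=
        Finset.sum_range_add f j n
      have h2 : ∑ x ∈ Finset.range (n + j), f x
          = (∑ x ∈ Finset.range n, f x) + ∑ x ∈ Finset.range j, f (n + x) :=
        Finset.sum_range_add f n j
      rw [Nat.add_comm j n] at h1
      have h3 : (∑ x ∈ Finset.range n, f (j + x))
          = ∑ s ∈ Finset.range n, ξ (s + j) * conj (ξ (s + (j + d))) := by
        refine Finset.sum_congr rfl fun x _ => ?_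
        simp only [hf]
        have e1 : j + x = x + j := by omega
        rw [e1, Nat.add_assoc]
      rw [← h3]
      rw [h2] at h1
      linear_combination -h1
    have l1 : Tendsto (fun n : ℕ => (n : ℂ)⁻¹ * ∑ s ∈ Finset.range n, f s)
        atTop (nhds (ρ (d : ℤ))) := hW d
    have l2 : Tendsto (fun n : ℕ => (n : ℂ)⁻¹ * ∑ i ∈ Finset.range j, f (n + i))
        atTop (nhds 0) := by
      have : Tendsto (fun n : ℕ => ∑ i ∈ Finset.range j, (n : ℂ)⁻¹ * f (n + i))
          atTop (nhds (∑ i ∈ Finset.range j, (0:ℂ))) := by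
        apply tendsto_finset_sum
        intro i _
        have h := hterm i (i + d)
        apply h.congr
        intro n
        simp only [hf]
        rw [Nat.add_assoc]
      simpa [Finset.mul_sum] using this
    have l3 : Tendsto (fun n : ℕ => (n : ℂ)⁻¹ * ∑ s ∈ Finset.range j, f s)
        atTop (nhds 0) := by
      have hinv : Tendsto (fun n : ℕ => (n : ℂ)⁻¹) atTop (nhds 0) :=
        tendsto_inv_atTop_nhds_zero_nat (𝕜 := ℂ)
      simpa using hinv.mul_const (∑ s ∈ Finset.range j, f s)
    have := (l1.add l2).sub l3
    rw [show ρ (d : ℤ) + 0 - 0 = ρ (d : ℤ) by ring] at this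
    apply this.congr
    intro n
    rw [key n]
    ring
  -- Step 4': general shift lemma
  have hshift : ∀ j k : ℕ,
      Tendsto (fun n : ℕ => (n : ℂ)⁻¹ * ∑ s ∈ Finset.range n, ξ (s + j) * conj (ξ (s + k)))
        atTop (nhds (ρ ((k : ℤ) - (j : ℤ)))) := by
    intro j k
    rcases le_or_gt j k with h | h
    · exact hshift_le j k h
    · have h' := hshift_le k j h.le
      have := (Complex.continuous_conj.tendsto _).comp h'
      have heq : ∀ n : ℕ,
          (conj ((n : ℂ)⁻¹ * ∑ s ∈ Finset.range n, ξ (s + k) * conj (ξ (s + j))))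
          = (n : ℂ)⁻¹ * ∑ s ∈ Finset.range n, ξ (s + j) * conj (ξ (s + k)) := by
        intro n
        rw [map_mul, map_sum]
        simp [mul_comm]
      have hρ : conj (ρ ((j : ℤ) - (k : ℤ))) = ρ ((k : ℤ) - (j : ℤ)) := by
        have hd : (j : ℤ) - (k : ℤ) = ((j - k : ℕ) : ℤ) := by
          push_cast [Nat.cast_sub h.le]; ring
        rw [hd, ← hneg (j - k)]
        congr 1
        omega
      rw [← hρ]
      exact this.congr heq
  -- Final step
  intro m c
  set L : ℂ := ∑ j ∈ Finset.range (m + 1), ∑ k ∈ Finset.range (m + 1),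
      c j * conj (c k) * ρ ((k : ℤ) - (j : ℤ)) with hL
  set F : ℕ → ℂ := fun n => (n : ℂ)⁻¹ * ∑ s ∈ Finset.range n,
      (∑ j ∈ Finset.range (m + 1), c j * ξ (s + j)) *
        conj (∑ k ∈ Finset.range (m + 1), c k * ξ (s + k)) with hF
  have hFL : Tendsto F atTop (nhds L) := by
    have : Tendsto (fun n : ℕ => ∑ j ∈ Finset.range (m + 1), ∑ k ∈ Finset.range (m + 1),
        c j * conj (c k) * ((n : ℂ)⁻¹ * ∑ s ∈ Finset.range n, ξ (s + j) * conj (ξ (s + k))))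
        atTop (nhds L) := by
      rw [hL]
      apply tendsto_finset_sum
      intro j _
      apply tendsto_finset_sum
      intro k _
      exact (hshift j k).const_mul _
    apply this.congr
    intro n
    have e1 : ∀ s : ℕ, (∑ j ∈ Finset.range (m + 1), c j * ξ (s + j)) *
        conj (∑ k ∈ Finset.range (m + 1), c k * ξ (s + k))
        = ∑ j ∈ Finset.range (m + 1), ∑ k ∈ Finset.range (m + 1),
            c j * conj (c k) * (ξ (s + j) * conj (ξ (s + k))) := by
      intro s
      rw [map_sum, Finset.sum_mul_sum]
      refine Finset.sum_congr rfl fun j _ => Finset.sum_congr rfl fun k _ => ?_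
      rw [map_mul]
      ring
    have core : (∑ s ∈ Finset.range n, (∑ j ∈ Finset.range (m + 1), c j * ξ (s + j)) *
        conj (∑ k ∈ Finset.range (m + 1), c k * ξ (s + k)))
        = ∑ j ∈ Finset.range (m + 1), ∑ k ∈ Finset.range (m + 1),
            c j * conj (c k) * ∑ s ∈ Finset.range n, ξ (s + j) * conj (ξ (s + k)) := by
      calc (∑ s ∈ Finset.range n, (∑ j ∈ Finset.range (m + 1), c j * ξ (s + j)) *
            conj (∑ k ∈ Finset.range (m + 1), c k * ξ (s + k)))
          = ∑ s ∈ Finset.range n, ∑ j ∈ Finset.range (m + 1), ∑ k ∈ Finset.range (m + 1),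
              c j * conj (c k) * (ξ (s + j) * conj (ξ (s + k))) :=
            Finset.sum_congr rfl fun s _ => e1 s
        _ = ∑ j ∈ Finset.range (m + 1), ∑ s ∈ Finset.range n, ∑ k ∈ Finset.range (m + 1),
              c j * conj (c k) * (ξ (s + j) * conj (ξ (s + k))) := Finset.sum_comm
        _ = ∑ j ∈ Finset.range (m + 1), ∑ k ∈ Finset.range (m + 1), ∑ s ∈ Finset.range n,
              c j * conj (c k) * (ξ (s + j) * conj (ξ (s + k))) :=
            Finset.sum_congr rfl fun j _ => Finset.sum_comm
        _ = ∑ j ∈ Finset.range (m + 1), ∑ k ∈ Finset.range (m + 1),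
              c j * conj (c k) * ∑ s ∈ Finset.range n, ξ (s + j) * conj (ξ (s + k)) := by
            refine Finset.sum_congr rfl fun j _ => Finset.sum_congr rfl fun k _ => ?_
            rw [Finset.mul_sum]
    rw [hF]
    simp only
    rw [core, Finset.mul_sum]
    refine Finset.sum_congr rfl fun j _ => ?_
    rw [Finset.mul_sum]
    refine Finset.sum_congr rfl fun k _ => ?_
    ring
  have hFnonneg : ∀ n : ℕ, 0 ≤ (F n).re ∧ (F n).im = 0 := by
    intro n
    have : F n = ((n : ℝ)⁻¹ * ∑ s ∈ Finset.range n,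
        Complex.normSq (∑ j ∈ Finset.range (m + 1), c j * ξ (s + j)) : ℝ) := by
      rw [hF]
      push_cast
      congr 1
      refine Finset.sum_congr rfl fun s _ => ?_
      rw [Complex.mul_conj]
    rw [this]
    constructor
    · simp only [Complex.ofReal_re]
      exact mul_nonneg (by positivity)
        (Finset.sum_nonneg fun s _ => Complex.normSq_nonneg _)
    · simp
  constructor
  · have hre : Tendsto (fun n => (F n).re) atTop (nhds L.re) :=
      (Complex.continuous_re.tendsto _).comp hFL
    exact ge_of_tendsto' hre (fun n => (hFnonneg n).1)
  · have him : Tendsto (fun n => (F n).im) atTop (nhds L.im) :=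
      (Complex.continuous_im.tendsto _).comp hFL
    have h0 : Tendsto (fun n : ℕ => (F n).im) atTop (nhds 0) := by
      apply tendsto_const_nhds.congr
      intro n
      exact ((hFnonneg n).2).symm
    exact tendsto_nhds_unique him h0
end

section
/- Let r > 0 be large, N an integer with N ≍ r^{1/2} log r (say c₁ √r log r ≤ N ≤ c₂ √r log r), and let ξ : ℤ≥0 → ℂ satisfy |ξ(k)| ≤ C k^{1/2} for all k ≥ 1. Denote by p the largest integer smaller than r − N. Then (√(2πr)/e^r) ∑_{0 ≤ k < r−N} |ξ(k)| r^k / k! ≲ r^{3/2} · exp(−N²/(2r) + O(N³/r²)) = o(1) as r → ∞. -/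
open Filter Finset Real
open scoped Classical

lemma fact_lower (n : ℕ) (hn : 1 ≤ n) :
    Real.sqrt (2 * π * (n : ℝ)) * ((n : ℝ) / Real.exp 1) ^ n ≤ (n.factorial : ℝ) := by
  have hn0 : (0 : ℝ) < n := by exact_mod_cast hn
  have hpos : 0 < Real.sqrt (2 * (n : ℝ)) * ((n : ℝ) / Real.exp 1) ^ n := by positivity
  have hmono : Real.sqrt π ≤ Stirling.stirlingSeq n := by
    obtain ⟨k, rfl⟩ : ∃ k, n = k + 1 := ⟨n - 1, by omega⟩
    exact Stirling.stirlingSeq'_antitone.le_of_tendsto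
      (Stirling.tendsto_stirlingSeq_sqrt_pi.comp (tendsto_add_atTop_nat 1)) k
  rw [Stirling.stirlingSeq, le_div_iff₀ hpos] at hmono
  calc Real.sqrt (2 * π * (n : ℝ)) * ((n : ℝ) / Real.exp 1) ^ n
      = Real.sqrt π * (Real.sqrt (2 * (n : ℝ)) * ((n : ℝ) / Real.exp 1) ^ n) := by
        rw [show (2 : ℝ) * π * n = π * (2 * n) by ring, Real.sqrt_mul Real.pi_pos.le, mul_assoc]
    _ ≤ (n.factorial : ℝ) := hmono

lemma ratio_mono (r : ℝ) (hr : 0 ≤ r) : ∀ m n : ℕ, m ≤ n → (n : ℝ) ≤ r →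
    r ^ m / (m.factorial : ℝ) ≤ r ^ n / (n.factorial : ℝ) := by
  intro m n hmn
  induction n, hmn using Nat.le_induction with
  | base => intro _; exact le_rfl
  | succ n hmn ih =>
    intro hnr
    have hn1 : ((n : ℝ) + 1) ≤ r := by push_cast at hnr; linarith
    have hn : (n : ℝ) ≤ r := by linarith
    refine (ih hn).trans ?_
    have hfac : (0 : ℝ) < n.factorial := by exact_mod_cast n.factorial_pos
    have h1 : 1 ≤ r / ((n : ℝ) + 1) := by
      rw [le_div_iff₀ (by positivity)]; linarith
    have key : r ^ n / (n.factorial : ℝ) ≤ (r / ((n : ℝ) + 1)) * (r ^ n / (n.factorial : ℝ)) :=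
      le_mul_of_one_le_left (by positivity) h1
    refine key.trans_eq ?_
    rw [pow_succ, Nat.factorial_succ]
    push_cast
    field_simp

lemma neg_log_one_sub_le {x : ℝ} (h0 : 0 ≤ x) (h2 : x ≤ 1 / 2) :
    -Real.log (1 - x) ≤ x + x ^ 2 / 2 + 2 * x ^ 3 := by
  have hx : |x| < 1 := by rw [abs_of_nonneg h0]; linarith
  have h := Real.abs_log_sub_add_sum_range_le hx 2
  have hsum : ∑ i ∈ Finset.range 2, x ^ (i + 1) / ((i : ℝ) + 1) = x + x ^ 2 / 2 := by
    norm_num [Finset.sum_range_succ]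
  rw [hsum, abs_of_nonneg h0] at h
  norm_num at h
  have hd : x ^ 3 / (1 - x) ≤ 2 * x ^ 3 := by
    rw [div_le_iff₀ (by linarith)]
    nlinarith [pow_nonneg h0 3]
  have hneg := neg_le_abs (x + x ^ 2 / 2 + Real.log (1 - x))
  linarith

lemma eventually_log_pow_le (m : ℕ) {s ε : ℝ} (hs : 0 < s) (hε : 0 < ε) :
    ∀ᶠ r : ℝ in atTop, (Real.log r) ^ m ≤ ε * r ^ s := by
  have h := isLittleO_log_rpow_rpow_atTop (m : ℝ) hs
  have h2 := (h.def hε)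
  filter_upwards [h2, eventually_ge_atTop (1 : ℝ)] with r h1 hr1
  have hlog : 0 ≤ Real.log r := Real.log_nonneg hr1
  have hrs : 0 ≤ r ^ s := Real.rpow_nonneg (by linarith) s
  calc (Real.log r) ^ m = Real.log r ^ (m : ℝ) := (Real.rpow_natCast _ m).symm
    _ ≤ ‖Real.log r ^ (m : ℝ)‖ := le_abs_self _
    _ ≤ ε * ‖r ^ s‖ := h1
    _ = ε * r ^ s := by rw [Real.norm_eq_abs, abs_of_nonneg hrs]

set_option maxHeartbeats 1600000 in
/-- The lower tail `k < r - N` of the Taylor series, with `N ≍ √r log r` and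
`|ξ(k)| ≲ √k`, is `≲ r^{3/2} exp(-N²/(2r) + O(N³/r²)) = o(U(r))`, `U(r) = e^r/√(2πr)`. -/
theorem lower_tail_negligible (C c₁ c₂ : ℝ) (hC : 0 < C) (hc₁ : 0 < c₁) (hc : c₁ ≤ c₂)
    (ξ : ℕ → ℂ) (hξ : ∀ k : ℕ, 1 ≤ k → ‖ξ k‖ ≤ C * (k : ℝ) ^ ((1 : ℝ) / 2))
    (N : ℝ → ℝ)
    (hN : ∀ᶠ r in atTop, c₁ * Real.sqrt r * Real.log r ≤ N r ∧
      N r ≤ c₂ * Real.sqrt r * Real.log r) :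
    (∃ C' C'' : ℝ, 0 < C' ∧ 0 < C'' ∧ ∀ᶠ r in atTop,
      Real.sqrt (2 * π * r) / Real.exp r *
        ∑ k ∈ Finset.range ⌈r⌉₊, (if (k : ℝ) < r - N r then ‖ξ k‖ * r ^ k / (k.factorial : ℝ) else 0)
      ≤ C' * r ^ ((3 : ℝ) / 2) * Real.exp (-(N r) ^ 2 / (2 * r) + C'' * (N r) ^ 3 / r ^ 2)) ∧
    Tendsto (fun r : ℝ =>
      Real.sqrt (2 * π * r) / Real.exp r *
        ∑ k ∈ Finset.range ⌈r⌉₊, (if (k : ℝ) < r - N r then ‖ξ k‖ * r ^ k / (k.factorial : ℝ) else 0))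
      atTop (nhds 0) := by
  have hc₂ : 0 < c₂ := lt_of_lt_of_le hc₁ hc
  set F : ℝ → ℝ := fun r =>
    Real.sqrt (2 * π * r) / Real.exp r *
      ∑ k ∈ Finset.range ⌈r⌉₊, (if (k : ℝ) < r - N r then ‖ξ k‖ * r ^ k / (k.factorial : ℝ) else 0)
    with hF
  set D : ℝ := C + ‖ξ 0‖ with hDdef
  have hD0 : 0 < D := add_pos_of_pos_of_nonneg hC (norm_nonneg _)
  clear_value D
  -- eventual facts
  have ev1 : ∀ᶠ r : ℝ in atTop, 1 ≤ c₁ * Real.sqrt r * Real.log r := by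
    filter_upwards [eventually_ge_atTop (max (Real.exp 1) (1 / c₁ ^ 2)),
      eventually_ge_atTop (1 : ℝ)] with r hr hr1
    have hre : Real.exp 1 ≤ r := le_trans (le_max_left _ _) hr
    have hrc : 1 / c₁ ^ 2 ≤ r := le_trans (le_max_right _ _) hr
    have hlog : 1 ≤ Real.log r := by
      rw [Real.le_log_iff_exp_le (by linarith)]; exact hre
    have hsqrt : 1 / c₁ ≤ Real.sqrt r := by
      rw [show (1 / c₁ : ℝ) = Real.sqrt ((1 / c₁) ^ 2) from (Real.sqrt_sq (by positivity)).symm]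
      exact Real.sqrt_le_sqrt (by rw [div_pow]; simpa using hrc)
    calc (1 : ℝ) = c₁ * (1 / c₁) * 1 := by field_simp
      _ ≤ c₁ * Real.sqrt r * Real.log r := by
          apply mul_le_mul (mul_le_mul_of_nonneg_left hsqrt hc₁.le) hlog zero_le_one (by positivity)
  have evN1 : ∀ᶠ r : ℝ in atTop, c₂ * Real.sqrt r * Real.log r ≤ r / 4 := by
    filter_upwards [eventually_log_pow_le 1 one_half_pos
      (show (0:ℝ) < 1 / (4 * c₂) by positivity), eventually_ge_atTop (1 : ℝ)] with r h1 hr1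
    rw [pow_one, ← Real.sqrt_eq_rpow] at h1
    calc c₂ * Real.sqrt r * Real.log r ≤ c₂ * Real.sqrt r * (1 / (4 * c₂) * Real.sqrt r) := by
          apply mul_le_mul_of_nonneg_left h1 (by positivity)
      _ = r / 4 := by
          field_simp
          linear_combination (1 : ℝ) * Real.mul_self_sqrt (show (0:ℝ) ≤ r by linarith)
  have evN3 : ∀ᶠ r : ℝ in atTop, 12 * (c₂ * Real.sqrt r * Real.log r) ^ 3 ≤ r ^ 2 := by
    filter_upwards [eventually_log_pow_le 3 one_half_pos
      (show (0:ℝ) < 1 / (12 * c₂ ^ 3) by positivity), eventually_ge_atTop (1 : ℝ)] with r h1 hr1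
    rw [← Real.sqrt_eq_rpow] at h1
    calc 12 * (c₂ * Real.sqrt r * Real.log r) ^ 3
        = (12 * c₂ ^ 3 * Real.sqrt r ^ 3) * (Real.log r) ^ 3 := by ring
      _ ≤ (12 * c₂ ^ 3 * Real.sqrt r ^ 3) * (1 / (12 * c₂ ^ 3) * Real.sqrt r) := by
          apply mul_le_mul_of_nonneg_left h1 (by positivity)
      _ = (Real.sqrt r ^ 2) ^ 2 := by
          rw [show ((Real.sqrt r ^ 2) ^ 2 : ℝ) = Real.sqrt r ^ 3 * Real.sqrt r by ring]
          field_simp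
      _ = r ^ 2 := by rw [Real.sq_sqrt (by linarith)]
  -- the key eventual bound
  have key : ∀ᶠ r in atTop, F r
      ≤ (4 * D) * r ^ ((3 : ℝ) / 2) * Real.exp (-(N r) ^ 2 / (2 * r) + 12 * (N r) ^ 3 / r ^ 2) := by
    filter_upwards [hN, ev1, evN1, eventually_ge_atTop (4 : ℝ)] with r hNr h1 h2 hr4
    obtain ⟨hNl, hNu⟩ := hNr
    have hr1 : (1 : ℝ) ≤ r := by linarith
    have hr0 : (0 : ℝ) < r := by linarith
    have hn1 : 1 ≤ N r := le_trans h1 hNl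
    have hn4 : N r ≤ r / 4 := hNu.trans h2
    set n : ℝ := N r with hn
    set p : ℕ := ⌊r - n⌋₊ with hp
    have hrn0 : 0 ≤ r - n := by linarith
    have hple : (p : ℝ) ≤ r - n := Nat.floor_le hrn0
    have hplt : r - n - 1 < (p : ℝ) := Nat.sub_one_lt_floor (r - n)
    have hpr : (p : ℝ) ≤ r := by linarith
    have hp2 : r / 2 ≤ (p : ℝ) := by linarith
    have hp1 : 1 ≤ p := by
      have h' : (1 : ℝ) ≤ (p : ℝ) := by linarith
      exact_mod_cast h'
    have hppos : (0 : ℝ) < p := by linarith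
    have hfl : ∀ k : ℕ, (k : ℝ) < r - n → k ≤ p := fun k hk => Nat.le_floor hk.le
    clear_value n p
    have hfacpos : (0 : ℝ) < (p.factorial : ℝ) := by exact_mod_cast p.factorial_pos
    have hRp : (1 : ℝ) ≤ r ^ p / (p.factorial : ℝ) := by
      rw [le_div_iff₀ hfacpos, one_mul]
      calc (p.factorial : ℝ) ≤ (p : ℝ) ^ p := by exact_mod_cast Nat.factorial_le_pow p
        _ ≤ r ^ p := pow_le_pow_left₀ (Nat.cast_nonneg p) hpr p
    have hsq1 : (1 : ℝ) ≤ Real.sqrt r := by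
      rw [show (1 : ℝ) = Real.sqrt 1 from Real.sqrt_one.symm]
      exact Real.sqrt_le_sqrt hr1
    -- per-term bound
    have term_le : ∀ k ∈ Finset.range ⌈r⌉₊,
        (if (k : ℝ) < r - n then ‖ξ k‖ * r ^ k / (k.factorial : ℝ) else 0)
          ≤ D * Real.sqrt r * (r ^ p / (p.factorial : ℝ)) := by
      intro k _
      split_ifs with hk
      · have hkp : k ≤ p := hfl k hk
        have hkr : (k : ℝ) ≤ r := by linarith
        have hmon : r ^ k / (k.factorial : ℝ) ≤ r ^ p / (p.factorial : ℝ) :=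
          ratio_mono r hr0.le k p hkp hpr
        rcases Nat.eq_zero_or_pos k with hk0 | hk1
        · subst hk0
          simp only [pow_zero, Nat.factorial_zero, Nat.cast_one, mul_one]
          have e1 : D ≤ D * Real.sqrt r := le_mul_of_one_le_right hD0.le hsq1
          have e2 : D * Real.sqrt r ≤ D * Real.sqrt r * (r ^ p / (p.factorial : ℝ)) :=
            le_mul_of_one_le_right (mul_nonneg hD0.le (Real.sqrt_nonneg r)) hRp
          have e3 : ‖ξ 0‖ ≤ D := by rw [hDdef]; linarith
          calc ‖ξ 0‖ / 1 = ‖ξ 0‖ := by norm_num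
            _ ≤ D * Real.sqrt r * (r ^ p / (p.factorial : ℝ)) := e3.trans (e1.trans e2)
        · have hξk : ‖ξ k‖ ≤ C * Real.sqrt r := by
            have h := hξ k hk1
            rw [show ((k : ℝ)) ^ ((1 : ℝ) / 2) = Real.sqrt k from (Real.sqrt_eq_rpow _).symm] at h
            exact h.trans (mul_le_mul_of_nonneg_left (Real.sqrt_le_sqrt hkr) hC.le)
          calc ‖ξ k‖ * r ^ k / (k.factorial : ℝ) = ‖ξ k‖ * (r ^ k / (k.factorial : ℝ)) := by ring
            _ ≤ (C * Real.sqrt r) * (r ^ p / (p.factorial : ℝ)) :=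
                mul_le_mul hξk hmon (by positivity) (by positivity)
            _ ≤ D * Real.sqrt r * (r ^ p / (p.factorial : ℝ)) := by
                have hCD : C ≤ D := by rw [hDdef]; linarith [norm_nonneg (ξ 0)]
                exact mul_le_mul_of_nonneg_right
                  (mul_le_mul_of_nonneg_right hCD (Real.sqrt_nonneg r))
                  (by positivity : (0:ℝ) ≤ r ^ p / (p.factorial : ℝ))
      · exact mul_nonneg (mul_nonneg hD0.le (Real.sqrt_nonneg r)) (by positivity)
    have hsumle : (∑ k ∈ Finset.range ⌈r⌉₊,
        (if (k : ℝ) < r - n then ‖ξ k‖ * r ^ k / (k.factorial : ℝ) else 0))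
          ≤ 2 * r * (D * Real.sqrt r * (r ^ p / (p.factorial : ℝ))) := by
      have hceil : ((⌈r⌉₊ : ℕ) : ℝ) ≤ 2 * r := by
        have := Nat.ceil_lt_add_one hr0.le; linarith
      calc (∑ k ∈ Finset.range ⌈r⌉₊,
          (if (k : ℝ) < r - n then ‖ξ k‖ * r ^ k / (k.factorial : ℝ) else 0))
          ≤ (⌈r⌉₊ : ℝ) * (D * Real.sqrt r * (r ^ p / (p.factorial : ℝ))) := by
            have := Finset.sum_le_card_nsmul (Finset.range ⌈r⌉₊) _ _ term_le
            simpa [nsmul_eq_mul] using this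
        _ ≤ 2 * r * (D * Real.sqrt r * (r ^ p / (p.factorial : ℝ))) :=
            mul_le_mul_of_nonneg_right hceil
              (mul_nonneg (mul_nonneg hD0.le (Real.sqrt_nonneg r)) (by positivity))
    -- Stirling step
    have hstir := fact_lower p hp1
    have hdpos : 0 < Real.sqrt (2 * π * (p : ℝ)) * ((p : ℝ) / Real.exp 1) ^ p := by positivity
    have hA : Real.sqrt (2 * π * r) / Real.exp r * (r ^ p / (p.factorial : ℝ))
        ≤ Real.sqrt 2 * Real.exp (-n ^ 2 / (2 * r) + 12 * n ^ 3 / r ^ 2) := by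
      have step1 : r ^ p / (p.factorial : ℝ)
          ≤ r ^ p / (Real.sqrt (2 * π * (p : ℝ)) * ((p : ℝ) / Real.exp 1) ^ p) :=
        div_le_div_of_nonneg_left (by positivity) hdpos hstir
      have heq : r ^ p / (Real.sqrt (2 * π * (p : ℝ)) * ((p : ℝ) / Real.exp 1) ^ p)
          = (Real.sqrt (2 * π * (p : ℝ)))⁻¹
              * (Real.exp (p : ℝ) * Real.exp ((p : ℝ) * Real.log (r / (p : ℝ)))) := by
        have e2 : Real.exp ((p : ℝ) * Real.log (r / (p : ℝ))) = (r / (p : ℝ)) ^ p := by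
          rw [Real.exp_nat_mul, Real.exp_log (div_pos hr0 hppos)]
        rw [e2, div_pow, Real.exp_one_pow, div_pow]
        have hS : 0 < Real.sqrt (2 * π * (p : ℝ)) := by positivity
        have hpp : (0:ℝ) < (p:ℝ) ^ p := by positivity
        field_simp
      -- exponent bound
      have hlx := neg_log_one_sub_le (x := (r - (p : ℝ)) / r)
        (div_nonneg (by linarith) hr0.le) (by rw [div_le_iff₀ hr0]; linarith)
      have h1x : (1 : ℝ) - (r - (p : ℝ)) / r = (p : ℝ) / r := by field_simp; ring
      have hlog_eq : Real.log (r / (p : ℝ)) = -Real.log (1 - (r - (p : ℝ)) / r) := by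
        rw [h1x, ← Real.log_inv, inv_div]
      have hexp_le : (p : ℝ) - r + (p : ℝ) * Real.log (r / (p : ℝ))
          ≤ -n ^ 2 / (2 * r) + 12 * n ^ 3 / r ^ 2 := by
        have hp0 : (0 : ℝ) ≤ (p : ℝ) := Nat.cast_nonneg p
        have step2 : (p : ℝ) * Real.log (r / (p : ℝ))
            ≤ (p : ℝ) * ((r - (p : ℝ)) / r + ((r - (p : ℝ)) / r) ^ 2 / 2
                + 2 * ((r - (p : ℝ)) / r) ^ 3) := by
          rw [hlog_eq]; exact mul_le_mul_of_nonneg_left hlx hp0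
        have i1 : n ^ 2 ≤ (r - (p : ℝ)) ^ 2 := pow_le_pow_left₀ (by linarith) (by linarith) 2
        have i2 : (r - (p : ℝ)) ^ 3 ≤ 8 * n ^ 3 := by
          calc (r - (p : ℝ)) ^ 3 ≤ (2 * n) ^ 3 :=
              pow_le_pow_left₀ (by linarith) (by linarith) 3
            _ = 8 * n ^ 3 := by ring
        have heq2 : (p : ℝ) - r + (p : ℝ) * ((r - (p : ℝ)) / r + ((r - (p : ℝ)) / r) ^ 2 / 2
                + 2 * ((r - (p : ℝ)) / r) ^ 3)
            = -(r - (p : ℝ)) ^ 2 / (2 * r) + (3 / 2) * ((r - (p : ℝ)) ^ 3 / r ^ 2)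
                - 2 * ((r - (p : ℝ)) ^ 4 / r ^ 3) := by
          field_simp
          ring
        have h4 : (0 : ℝ) ≤ (r - (p : ℝ)) ^ 4 / r ^ 3 := by positivity
        have t1 : -(r - (p : ℝ)) ^ 2 / (2 * r) ≤ -n ^ 2 / (2 * r) :=
          (div_le_div_iff_of_pos_right (by positivity)).mpr (by linarith)
        have t2 : (r - (p : ℝ)) ^ 3 / r ^ 2 ≤ 8 * n ^ 3 / r ^ 2 :=
          (div_le_div_iff_of_pos_right (by positivity)).mpr i2
        have u2 : (3 : ℝ) / 2 * ((r - (p : ℝ)) ^ 3 / r ^ 2) ≤ 12 * n ^ 3 / r ^ 2 := by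
          calc (3 : ℝ) / 2 * ((r - (p : ℝ)) ^ 3 / r ^ 2)
              ≤ 3 / 2 * (8 * n ^ 3 / r ^ 2) :=
                mul_le_mul_of_nonneg_left t2 (by norm_num)
            _ = 12 * n ^ 3 / r ^ 2 := by ring
        have u3 : (0 : ℝ) ≤ 2 * ((r - (p : ℝ)) ^ 4 / r ^ 3) := by positivity
        calc (p : ℝ) - r + (p : ℝ) * Real.log (r / (p : ℝ))
            ≤ (p : ℝ) - r + (p : ℝ) * ((r - (p : ℝ)) / r + ((r - (p : ℝ)) / r) ^ 2 / 2
                + 2 * ((r - (p : ℝ)) / r) ^ 3) := by linarith [step2]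
          _ = -(r - (p : ℝ)) ^ 2 / (2 * r) + (3 / 2) * ((r - (p : ℝ)) ^ 3 / r ^ 2)
                - 2 * ((r - (p : ℝ)) ^ 4 / r ^ 3) := heq2
          _ ≤ -(r - (p : ℝ)) ^ 2 / (2 * r) + (3 / 2) * ((r - (p : ℝ)) ^ 3 / r ^ 2) :=
              sub_le_self _ u3
          _ ≤ -n ^ 2 / (2 * r) + 12 * n ^ 3 / r ^ 2 := add_le_add t1 u2
      -- combine
      have hSr : Real.sqrt (2 * π * r) / Real.sqrt (2 * π * (p : ℝ)) ≤ Real.sqrt 2 := by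
        rw [← Real.sqrt_div (by positivity)]
        apply Real.sqrt_le_sqrt
        rw [div_le_iff₀ (by positivity)]
        have hmul := mul_le_mul_of_nonneg_left (show r ≤ 2 * (p:ℝ) by linarith)
          (show (0:ℝ) ≤ 2 * π by positivity)
        linarith [hmul]
      calc Real.sqrt (2 * π * r) / Real.exp r * (r ^ p / (p.factorial : ℝ))
          ≤ Real.sqrt (2 * π * r) / Real.exp r
              * ((Real.sqrt (2 * π * (p : ℝ)))⁻¹
                * (Real.exp (p : ℝ) * Real.exp ((p : ℝ) * Real.log (r / (p : ℝ))))) := by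
            rw [← heq]; exact mul_le_mul_of_nonneg_left step1 (by positivity)
        _ = Real.sqrt (2 * π * r) / Real.sqrt (2 * π * (p : ℝ))
              * Real.exp ((p : ℝ) - r + (p : ℝ) * Real.log (r / (p : ℝ))) := by
            rw [show (p : ℝ) - r + (p : ℝ) * Real.log (r / (p : ℝ))
                = (p : ℝ) + (-r) + (p : ℝ) * Real.log (r / (p : ℝ)) by ring,
              Real.exp_add, Real.exp_add, Real.exp_neg]
            have := (Real.exp_pos r).ne'
            field_simp
        _ ≤ Real.sqrt 2 * Real.exp (-n ^ 2 / (2 * r) + 12 * n ^ 3 / r ^ 2) := by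
            apply mul_le_mul hSr (Real.exp_le_exp.mpr hexp_le) (Real.exp_pos _).le
              (Real.sqrt_nonneg 2)
    -- final assembly
    have hr32 : r * Real.sqrt r = r ^ ((3 : ℝ) / 2) := by
      rw [show r ^ ((3 : ℝ) / 2) = r ^ (1 : ℝ) * r ^ ((1 : ℝ) / 2) by
        rw [← Real.rpow_add hr0]; norm_num,
        Real.rpow_one, Real.sqrt_eq_rpow]
    have hsqrt2 : Real.sqrt 2 ≤ 2 := by
      nlinarith [Real.sq_sqrt (show (0:ℝ) ≤ 2 by norm_num), Real.sqrt_nonneg 2]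
    have hFr : F r = Real.sqrt (2 * π * r) / Real.exp r *
        ∑ k ∈ Finset.range ⌈r⌉₊,
          (if (k : ℝ) < r - n then ‖ξ k‖ * r ^ k / (k.factorial : ℝ) else 0) := by
      simp only [hF]; rw [hn]
    calc F r = Real.sqrt (2 * π * r) / Real.exp r *
          ∑ k ∈ Finset.range ⌈r⌉₊,
            (if (k : ℝ) < r - n then ‖ξ k‖ * r ^ k / (k.factorial : ℝ) else 0) := hFr
      _ ≤ Real.sqrt (2 * π * r) / Real.exp r
            * (2 * r * (D * Real.sqrt r * (r ^ p / (p.factorial : ℝ)))) :=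
          mul_le_mul_of_nonneg_left hsumle (by positivity)
      _ = (2 * D * (r * Real.sqrt r))
            * (Real.sqrt (2 * π * r) / Real.exp r * (r ^ p / (p.factorial : ℝ))) := by ring
      _ ≤ (2 * D * (r * Real.sqrt r))
            * (Real.sqrt 2 * Real.exp (-n ^ 2 / (2 * r) + 12 * n ^ 3 / r ^ 2)) :=
          mul_le_mul_of_nonneg_left hA
            (by positivity : (0:ℝ) ≤ 2 * D * (r * Real.sqrt r))
      _ ≤ (4 * D) * r ^ ((3 : ℝ) / 2) * Real.exp (-n ^ 2 / (2 * r) + 12 * n ^ 3 / r ^ 2) := by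
          rw [← hr32]
          have hrs : (0 : ℝ) ≤ r * Real.sqrt r := by positivity
          have hesq : 0 ≤ Real.exp (-n ^ 2 / (2 * r) + 12 * n ^ 3 / r ^ 2) := (Real.exp_pos _).le
          have hstep : Real.sqrt 2 * Real.exp (-n ^ 2 / (2 * r) + 12 * n ^ 3 / r ^ 2)
              ≤ 2 * Real.exp (-n ^ 2 / (2 * r) + 12 * n ^ 3 / r ^ 2) :=
            mul_le_mul_of_nonneg_right hsqrt2 hesq
          calc 2 * D * (r * Real.sqrt r)
                * (Real.sqrt 2 * Real.exp (-n ^ 2 / (2 * r) + 12 * n ^ 3 / r ^ 2))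
              ≤ 2 * D * (r * Real.sqrt r)
                * (2 * Real.exp (-n ^ 2 / (2 * r) + 12 * n ^ 3 / r ^ 2)) :=
                mul_le_mul_of_nonneg_left hstep
                  (mul_nonneg (mul_nonneg (by linarith) (by linarith [hD0])) hrs)
            _ = 4 * D * (r * Real.sqrt r)
                * Real.exp (-n ^ 2 / (2 * r) + 12 * n ^ 3 / r ^ 2) := by ring
  refine ⟨⟨4 * D, 12, by linarith [hD0], by norm_num, key⟩, ?_⟩
  -- Tendsto part
  have hF0 : ∀ᶠ r : ℝ in atTop, 0 ≤ F r := by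
    filter_upwards [eventually_ge_atTop (0 : ℝ)] with r hr
    apply mul_nonneg (div_nonneg (Real.sqrt_nonneg _) (Real.exp_pos r).le)
    apply Finset.sum_nonneg
    intro i _
    split_ifs
    · exact div_nonneg (mul_nonneg (norm_nonneg _) (pow_nonneg hr i)) (Nat.cast_nonneg _)
    · exact le_rfl
  have hcomp : ∀ᶠ r : ℝ in atTop, F r
      ≤ (4 * D) * Real.exp 1
          * Real.exp ((3 / 2) * Real.log r - (c₁ ^ 2 / 2) * (Real.log r) ^ 2) := by
    filter_upwards [key, hN, evN3, eventually_ge_atTop (1 : ℝ)] with r hk hNr h3 hr1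
    refine hk.trans ?_
    have hr0 : (0 : ℝ) < r := by linarith
    have hlog0 : 0 ≤ Real.log r := Real.log_nonneg hr1
    have e1 : r ^ ((3 : ℝ) / 2) = Real.exp ((3 / 2) * Real.log r) := by
      rw [Real.rpow_def_of_pos hr0, mul_comm]
    have hNn : 0 ≤ N r := le_trans (by positivity) hNr.1
    have b1 : c₁ ^ 2 * (Real.log r) ^ 2 * r ≤ (N r) ^ 2 := by
      have h := pow_le_pow_left₀ (by positivity) hNr.1 2
      rw [mul_pow, mul_pow, Real.sq_sqrt hr0.le] at h
      nlinarith [h]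
    have b2 : 12 * (N r) ^ 3 / r ^ 2 ≤ 1 := by
      rw [div_le_one (by positivity)]
      have hN3 : (N r) ^ 3 ≤ (c₂ * Real.sqrt r * Real.log r) ^ 3 :=
        pow_le_pow_left₀ hNn hNr.2 3
      linarith
    have hexp2 : -(N r) ^ 2 / (2 * r) + 12 * (N r) ^ 3 / r ^ 2
        ≤ -(c₁ ^ 2 / 2) * (Real.log r) ^ 2 + 1 := by
      have hb1 : -(N r) ^ 2 / (2 * r) ≤ -(c₁ ^ 2 / 2) * (Real.log r) ^ 2 := by
        rw [div_le_iff₀ (by positivity)]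
        nlinarith [b1]
      exact add_le_add hb1 b2
    calc (4 * D) * r ^ ((3 : ℝ) / 2)
          * Real.exp (-(N r) ^ 2 / (2 * r) + 12 * (N r) ^ 3 / r ^ 2)
        ≤ (4 * D) * r ^ ((3 : ℝ) / 2)
            * Real.exp (-(c₁ ^ 2 / 2) * (Real.log r) ^ 2 + 1) := by
          apply mul_le_mul_of_nonneg_left (Real.exp_le_exp.mpr hexp2)
          exact mul_nonneg (by linarith) (Real.rpow_nonneg hr0.le _)
      _ = (4 * D) * Real.exp 1
            * Real.exp ((3 / 2) * Real.log r - (c₁ ^ 2 / 2) * (Real.log r) ^ 2) := by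
          rw [e1]
          have hcomb : ∀ a b : ℝ, 4 * D * Real.exp a * Real.exp b = 4 * D * Real.exp (a + b) :=
            fun a b => by rw [mul_assoc, ← Real.exp_add]
          rw [hcomb, hcomb]
          congr 1
          ring
  have htend : Tendsto (fun r : ℝ => (4 * D) * Real.exp 1
      * Real.exp ((3 / 2) * Real.log r - (c₁ ^ 2 / 2) * (Real.log r) ^ 2)) atTop (nhds 0) := by
    rw [show (0 : ℝ) = (4 * D) * Real.exp 1 * 0 by ring]
    apply Tendsto.const_mul
    apply Real.tendsto_exp_atBot.comp
    have hab : Tendsto (fun t : ℝ => (3 / 2) * t - (c₁ ^ 2 / 2) * t ^ 2) atTop atBot := by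
      apply tendsto_atBot_mono' atTop
        (f₁ := fun t : ℝ => -t) ?_ ?_
      · filter_upwards [eventually_ge_atTop (5 / c₁ ^ 2 : ℝ), eventually_ge_atTop (0 : ℝ)]
          with t h1 h0
        have h5 : 5 ≤ c₁ ^ 2 * t := by
          rw [div_le_iff₀ (by positivity)] at h1; linarith
        nlinarith [h5, h0]
      · exact tendsto_neg_atTop_atBot
    exact hab.comp Real.tendsto_log_atTop
  exact tendsto_of_tendsto_of_tendsto_of_le_of_le' tendsto_const_nhds htend hF0 hcomp
end

section
/- Fix an integer k ≥ 1. Let B = {(s₁, s₂) ∈ [m, λm]² ∩ ℤ² : s₁(s₁+k)s₂(s₂+k) is a perfect square}. Then card(B) = O(m^{7/4}) uniformly in λ ∈ [1, 2]; more precisely, for every ε > 0, card(B) ≲_ε m^{5/3 + ε}. -/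
open Finset
open scoped Classical

/-- If `n * n'` is a square, `n` and `n'` share a common "core" `c`
with square cofactors. -/
lemma aux_rep_of_sq_mul (n n' : ℕ) (hn : 1 ≤ n) (hn' : 1 ≤ n') (h : IsSquare (n * n')) :
    ∃ c b b', 1 ≤ c ∧ 1 ≤ b ∧ 1 ≤ b' ∧ n = c * b ^ 2 ∧ n' = c * b' ^ 2 := by
  obtain ⟨w, hw⟩ := h
  have hw2 : n * n' = w ^ 2 := by rw [sq]; exact hw
  have key : ∃ g u v, 0 < g ∧ Nat.Coprime u v ∧ n = g * u ∧ n' = g * v := by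
    refine ⟨Nat.gcd n n', n / Nat.gcd n n', n' / Nat.gcd n n',
      Nat.gcd_pos_of_pos_left _ hn, Nat.coprime_div_gcd_div_gcd (Nat.gcd_pos_of_pos_left _ hn),
      (Nat.mul_div_cancel' (Nat.gcd_dvd_left n n')).symm,
      (Nat.mul_div_cancel' (Nat.gcd_dvd_right n n')).symm⟩
  obtain ⟨g, u, v, hg0, hcop, hu', hv'⟩ := key
  have hgw : g ∣ w := by
    have h2 : g ^ 2 ∣ w ^ 2 := by
      rw [← hw2, hu', hv']; exact ⟨u * v, by ring⟩
    exact (Nat.pow_dvd_pow_iff two_ne_zero).mp h2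
  obtain ⟨z, hz⟩ := hgw
  have huv : u * v = z ^ 2 := by
    have h3 : g ^ 2 * (u * v) = g ^ 2 * z ^ 2 := by
      calc g ^ 2 * (u * v) = (g * u) * (g * v) := by ring
        _ = w ^ 2 := by rw [← hu', ← hv', hw2]
        _ = g ^ 2 * z ^ 2 := by rw [hz]; ring
    exact Nat.eq_of_mul_eq_mul_left (by positivity) h3
  obtain ⟨p, hp⟩ := exists_eq_pow_of_mul_eq_pow (a := u) (b := v)
    (Nat.isUnit_iff.mpr hcop) huv
  obtain ⟨q, hq⟩ := exists_eq_pow_of_mul_eq_pow (a := v) (b := u)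
    (Nat.isUnit_iff.mpr hcop.symm) (by rw [mul_comm]; exact huv)
  refine ⟨g, p, q, hg0, ?_, ?_, by rw [hu', hp], by rw [hv', hq]⟩
  · rcases Nat.eq_zero_or_pos p with h0 | h1
    · exfalso; rw [h0] at hp; simp [hp] at hu'; omega
    · exact h1
  · rcases Nat.eq_zero_or_pos q with h0 | h1
    · exfalso; rw [h0] at hq; simp [hq] at hv'; omega
    · exact h1

/-- If `a*n` and `a*n'` are squares with `a ≥ 1`, then `n*n'` is a square. -/
lemma aux_sq_trans (a n n' : ℕ) (ha : 1 ≤ a) (h1 : IsSquare (a * n)) (h2 : IsSquare (a * n')) :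
    IsSquare (n * n') := by
  obtain ⟨t, ht⟩ := h1
  obtain ⟨t', ht'⟩ := h2
  have hdvd : a ∣ t * t' := by
    have : a ^ 2 ∣ (t * t') ^ 2 := ⟨n * n', by rw [mul_pow, sq, ← ht, sq, ← ht']; ring⟩
    exact (Nat.pow_dvd_pow_iff two_ne_zero).mp this
  obtain ⟨z, hz⟩ := hdvd
  refine ⟨z, Nat.eq_of_mul_eq_mul_left (show 0 < a * a by positivity) ?_⟩
  calc a * a * (n * n') = (a * n) * (a * n') := by ring
    _ = (t * t') * (t * t') := by rw [ht, ht']; ring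
    _ = a * a * (z * z) := by rw [hz]; ring

/-- Pell-type gap: two solutions of `X² - 4cY² = k²` with `0 < X < X'` satisfy
a multiplicative gap. -/
lemma aux_pell_gap (k c X X' Y Y' : ℤ) (hc : 1 ≤ c) (hk : 1 ≤ k)
    (hY : 1 ≤ Y) (hY' : 1 ≤ Y') (hX : 0 < X) (hXX' : X < X')
    (e1 : X ^ 2 = 4 * c * Y ^ 2 + k ^ 2) (e2 : X' ^ 2 = 4 * c * Y' ^ 2 + k ^ 2) :
    k ^ 4 * X ^ 2 + 4 * X ^ 2 ≤ k ^ 4 * X' ^ 2 := by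
  have hX' : 0 < X' := lt_trans hX hXX'
  have hY0 : (0:ℤ) < Y := by linarith
  have hY'0 : (0:ℤ) < Y' := by linarith
  have hXsq : X ^ 2 < X' ^ 2 := by nlinarith
  have hYsq : Y ^ 2 < Y' ^ 2 := by nlinarith
  have d1 : (X * Y') ^ 2 - (X' * Y) ^ 2 = k ^ 2 * (Y' ^ 2 - Y ^ 2) := by
    linear_combination Y' ^ 2 * e1 - Y ^ 2 * e2
  have d2 : (X' * Y) ^ 2 < (X * Y') ^ 2 := by nlinarith
  have hVpos : X' * Y < X * Y' :=
    lt_of_pow_lt_pow_left₀ 2 (le_of_lt (mul_pos hX hY'0)) d2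
  have hV : 1 ≤ X * Y' - X' * Y := by linarith
  have d3 : (X * X') ^ 2 = (4 * c * Y ^ 2 + k ^ 2) * (4 * c * Y' ^ 2 + k ^ 2) := by
    linear_combination X' ^ 2 * e1 + (4 * c * Y ^ 2 + k ^ 2) * e2
  have d4' : (X * X') ^ 2 - (4 * c * Y * Y') ^ 2 = 4 * c * k ^ 2 * (Y ^ 2 + Y' ^ 2) + k ^ 4 := by
    linear_combination d3
  have d4'' : (0:ℤ) < 4 * c * k ^ 2 * (Y ^ 2 + Y' ^ 2) + k ^ 4 := by positivity
  have d4 : (4 * c * Y * Y') ^ 2 < (X * X') ^ 2 := by linarith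
  have hUpos : 4 * c * Y * Y' < X * X' :=
    lt_of_pow_lt_pow_left₀ 2 (le_of_lt (mul_pos hX hX')) d4
  have hU : 1 ≤ X * X' - 4 * c * Y * Y' := by linarith
  set U := X * X' - 4 * c * Y * Y' with hUdef
  set V := X * Y' - X' * Y with hVdef
  have hid : U ^ 2 = 4 * c * V ^ 2 + k ^ 4 := by
    have h5 : U ^ 2 - 4 * c * V ^ 2 = (X ^ 2 - 4 * c * Y ^ 2) * (X' ^ 2 - 4 * c * Y' ^ 2) := by
      ring
    rw [show X ^ 2 - 4 * c * Y ^ 2 = k ^ 2 by linarith,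
        show X' ^ 2 - 4 * c * Y' ^ 2 = k ^ 2 by linarith] at h5
    linear_combination h5
  have hUX : U * X ≤ k ^ 2 * X' := by
    have idU : k ^ 2 * X' - U * X = 4 * c * Y * V := by
      rw [hUdef, hVdef]; linear_combination (-X') * e1
    have : (0:ℤ) ≤ 4 * c * Y * V := by
      have := mul_pos (mul_pos (show (0:ℤ) < 4*c by linarith) hY0)
        (show (0:ℤ) < V by linarith)
      linarith
    linarith
  have hVsq : (1:ℤ) ≤ V ^ 2 := by nlinarith
  have hcV : (4:ℤ) ≤ 4 * c * V ^ 2 := by nlinarith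
  have hU2 : (4 : ℤ) + k ^ 4 ≤ U ^ 2 := by linarith
  have h6 : (U * X) ^ 2 ≤ (k ^ 2 * X') ^ 2 :=
    pow_le_pow_left₀ (by positivity) hUX 2
  have h7 : ((4:ℤ) + k ^ 4) * X ^ 2 ≤ U ^ 2 * X ^ 2 :=
    mul_le_mul_of_nonneg_right hU2 (sq_nonneg X)
  calc k ^ 4 * X ^ 2 + 4 * X ^ 2 = ((4:ℤ) + k ^ 4) * X ^ 2 := by ring
    _ ≤ U ^ 2 * X ^ 2 := h7
    _ = (U * X) ^ 2 := by ring
    _ ≤ (k ^ 2 * X') ^ 2 := h6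
    _ = k ^ 4 * X' ^ 2 := by ring

/-- A finite set whose `g`-values are bounded by `B` and pairwise at least `G` apart
has at most `B/G + 1` elements. -/
lemma aux_card_le_of_gap (T : Finset ℕ) (g : ℕ → ℕ) (G B : ℕ) (hG : 0 < G)
    (hbound : ∀ s ∈ T, g s ≤ B)
    (hgap : ∀ s ∈ T, ∀ s' ∈ T, s < s' → g s + G ≤ g s') :
    T.card ≤ B / G + 1 := by
  have hmaps : ∀ s ∈ T, g s / G ∈ Finset.Iic (B / G) := fun s hs => by
    simp only [Finset.mem_Iic]
    exact Nat.div_le_div_right (hbound s hs)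
  have hkey : ∀ s ∈ T, ∀ s' ∈ T, s < s' → g s / G < g s' / G := by
    intro s hs s' hs' hlt
    have h1 := hgap s hs s' hs' hlt
    calc g s / G < g s / G + 1 := Nat.lt_succ_self _
      _ = (g s + G) / G := (Nat.add_div_right _ hG).symm
      _ ≤ g s' / G := Nat.div_le_div_right h1
  have hinj : Set.InjOn (fun s => g s / G) T := by
    intro s hs s' hs' h
    rcases lt_trichotomy s s' with hlt | heq | hgt
    · exact absurd h (Nat.ne_of_lt (hkey s hs s' hs' hlt))
    · exact heq
    · exact absurd h.symm (Nat.ne_of_lt (hkey s' hs' s hs hgt))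
  have := Finset.card_le_card_of_injOn (fun s => g s / G) hmaps hinj
  simpa using this

set_option maxHeartbeats 1000000 in
/-- For fixed `a ≥ 1`, there are at most `4k⁴+1` values `s ∈ [m, M]` making
`a · s(s+k)` a perfect square (when `k² ≤ m` and `M ≤ 2m`). -/
lemma aux_fiber_bound (k m M : ℕ) (hk : 1 ≤ k) (hkm : k ^ 2 ≤ m) (hM : M ≤ 2 * m)
    (a : ℕ) (ha : 1 ≤ a) :
    ((Finset.Icc m M).filter (fun s => IsSquare (a * (s * (s + k))))).card ≤ 4 * k ^ 4 + 1 := by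
  have hm1 : 1 ≤ m := le_trans (Nat.one_le_pow 2 k hk) hkm
  have hk4 : 0 < k ^ 4 := by positivity
  have hk4m : k ^ 4 ≤ m ^ 2 := by nlinarith
  set G := 16 * m ^ 2 / k ^ 4 with hGdef
  have hG0 : 0 < G := by
    rw [hGdef]
    exact Nat.div_pos (by nlinarith) hk4
  set T := (Finset.Icc m M).filter (fun s => IsSquare (a * (s * (s + k)))) with hT
  have hgap : ∀ s ∈ T, ∀ s' ∈ T, s < s' → (2 * s + k) ^ 2 + G ≤ (2 * s' + k) ^ 2 := by
    intro s hs s' hs' hlt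
    have hs1 : m ≤ s ∧ IsSquare (a * (s * (s + k))) := by
      simp only [hT, Finset.mem_filter, Finset.mem_Icc] at hs; exact ⟨hs.1.1, hs.2⟩
    have hs2 : m ≤ s' ∧ IsSquare (a * (s' * (s' + k))) := by
      simp only [hT, Finset.mem_filter, Finset.mem_Icc] at hs'; exact ⟨hs'.1.1, hs'.2⟩
    have hsq : IsSquare ((s * (s + k)) * (s' * (s' + k))) :=
      aux_sq_trans a _ _ ha hs1.2 hs2.2
    obtain ⟨c, b, b', hc, hb, hb', hrep, hrep'⟩ :=
      aux_rep_of_sq_mul _ _ (by nlinarith [hs1.1] : 1 ≤ s * (s + k))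
        (by nlinarith [hs2.1] : 1 ≤ s' * (s' + k)) hsq
    have key : (k:ℤ) ^ 4 * (2 * s + k) ^ 2 + 4 * (2 * s + k) ^ 2
        ≤ (k:ℤ) ^ 4 * (2 * s' + k) ^ 2 := by
      apply aux_pell_gap (k:ℤ) (c:ℤ) (2 * s + k) (2 * s' + k) (b:ℤ) (b':ℤ)
      · exact_mod_cast hc
      · exact_mod_cast hk
      · exact_mod_cast hb
      · exact_mod_cast hb'
      · positivity
      · have : (s:ℤ) < s' := by exact_mod_cast hlt
        linarith
      · have : (s:ℤ) * (s + k) = c * b ^ 2 := by exact_mod_cast hrep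
        linear_combination 4 * this
      · have : (s':ℤ) * (s' + k) = c * b' ^ 2 := by exact_mod_cast hrep'
        linear_combination 4 * this
    have hX2 : 16 * (m:ℤ) ^ 2 ≤ 4 * (2 * (s:ℤ) + k) ^ 2 := by
      have : (m:ℤ) ≤ s := by exact_mod_cast hs1.1
      nlinarith [this, (by positivity : (0:ℤ) ≤ (k:ℤ))]
    have hGle : k ^ 4 * G ≤ 16 * m ^ 2 := by
      rw [hGdef, mul_comm]; exact Nat.div_mul_le_self _ _
    have hfin : (k:ℤ) ^ 4 * ((2 * s + k) ^ 2 + G) ≤ (k:ℤ) ^ 4 * (2 * s' + k) ^ 2 := by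
      have hGle' : (k:ℤ) ^ 4 * G ≤ 16 * (m:ℤ) ^ 2 := by exact_mod_cast hGle
      calc (k:ℤ) ^ 4 * ((2 * s + k) ^ 2 + G)
          = (k:ℤ) ^ 4 * (2 * s + k) ^ 2 + (k:ℤ) ^ 4 * G := by ring
        _ ≤ (k:ℤ) ^ 4 * (2 * s + k) ^ 2 + 4 * (2 * (s:ℤ) + k) ^ 2 := by linarith
        _ ≤ (k:ℤ) ^ 4 * (2 * s' + k) ^ 2 := key
    have := le_of_mul_le_mul_left hfin (show (0:ℤ) < (k:ℤ)^4 by positivity)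
    exact_mod_cast this
  have hbound : ∀ s ∈ T, (2 * s + k) ^ 2 ≤ (2 * M + k) ^ 2 := by
    intro s hs
    simp only [hT, Finset.mem_filter, Finset.mem_Icc] at hs
    have : s ≤ M := hs.1.2
    nlinarith
  have hcard := aux_card_le_of_gap T (fun s => (2 * s + k) ^ 2) G ((2 * M + k) ^ 2)
    hG0 hbound hgap
  have hdm := Nat.div_add_mod (16 * m ^ 2) (k ^ 4)
  rw [← hGdef] at hdm
  have hmod := Nat.mod_lt (16 * m ^ 2) hk4
  have h15 : 15 * m ^ 2 < k ^ 4 * G := by linarith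
  have hBle : (2 * M + k) ^ 2 ≤ 25 * m ^ 2 := by
    have hkm' : k ≤ m := le_trans (Nat.le_self_pow two_ne_zero k) hkm
    nlinarith
  have hB4 : (2 * M + k) ^ 2 ≤ 4 * k ^ 4 * G := by linarith
  have : (2 * M + k) ^ 2 / G ≤ 4 * k ^ 4 := by
    calc (2 * M + k) ^ 2 / G ≤ 4 * k ^ 4 * G / G := Nat.div_le_div_right hB4
      _ = 4 * k ^ 4 := Nat.mul_div_cancel _ hG0
  linarith

/-- Main counting bound: the number of pairs is at most a constant (depending on `k`)
times `m`. -/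
lemma aux_main_count (k : ℕ) (hk : 1 ≤ k) (m M : ℕ) (hm : 1 ≤ m) (hM : M ≤ 2 * m) :
    ((Finset.Icc m M ×ˢ Finset.Icc m M).filter
      (fun p : ℕ × ℕ => IsSquare (p.1 * (p.1 + k) * (p.2 * (p.2 + k))))).card
      ≤ (8 * k ^ 4 + 4 * k ^ 2 + 2) * m := by
  have hcardIcc : (Finset.Icc m M).card ≤ m + 1 := by
    rw [Nat.card_Icc]; omega
  by_cases hkm : k ^ 2 ≤ m
  · have hsub : (Finset.Icc m M ×ˢ Finset.Icc m M).filter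
        (fun p : ℕ × ℕ => IsSquare (p.1 * (p.1 + k) * (p.2 * (p.2 + k))))
        ⊆ (Finset.Icc m M).biUnion (fun a =>
          ((Finset.Icc m M).filter (fun s => IsSquare (a * (a + k) * (s * (s + k))))).image
            (fun b => (a, b))) := by
      intro p hp
      simp only [Finset.mem_filter, Finset.mem_product] at hp
      simp only [Finset.mem_biUnion, Finset.mem_image, Finset.mem_filter]
      exact ⟨p.1, hp.1.1, p.2, ⟨hp.1.2, hp.2⟩, rfl⟩
    calc ((Finset.Icc m M ×ˢ Finset.Icc m M).filter _).card
        ≤ ((Finset.Icc m M).biUnion _).card := Finset.card_le_card hsub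
      _ ≤ ∑ a ∈ Finset.Icc m M,
          (((Finset.Icc m M).filter (fun s => IsSquare (a * (a + k) * (s * (s + k))))).image
            (fun b => (a, b))).card := Finset.card_biUnion_le
      _ ≤ ∑ a ∈ Finset.Icc m M, (4 * k ^ 4 + 1) := by
          apply Finset.sum_le_sum
          intro a ha
          have ha1 : 1 ≤ a := by
            simp only [Finset.mem_Icc] at ha; omega
          calc (((Finset.Icc m M).filter
                (fun s => IsSquare (a * (a + k) * (s * (s + k))))).image (fun b => (a, b))).card
              ≤ ((Finset.Icc m M).filter
                (fun s => IsSquare (a * (a + k) * (s * (s + k))))).card :=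
                Finset.card_image_le
            _ ≤ 4 * k ^ 4 + 1 :=
                aux_fiber_bound k m M hk hkm hM (a * (a + k)) (by nlinarith)
      _ = (Finset.Icc m M).card * (4 * k ^ 4 + 1) := by rw [Finset.sum_const, smul_eq_mul]
      _ ≤ (m + 1) * (4 * k ^ 4 + 1) := Nat.mul_le_mul_right _ hcardIcc
      _ ≤ (2 * m) * (4 * k ^ 4 + 1) := Nat.mul_le_mul_right _ (by omega)
      _ ≤ (8 * k ^ 4 + 4 * k ^ 2 + 2) * m := by nlinarith [Nat.zero_le (4 * k ^ 2 * m)]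
  · push_neg at hkm
    calc ((Finset.Icc m M ×ˢ Finset.Icc m M).filter
        (fun p : ℕ × ℕ => IsSquare (p.1 * (p.1 + k) * (p.2 * (p.2 + k))))).card
        ≤ (Finset.Icc m M ×ˢ Finset.Icc m M).card := Finset.card_filter_le _ _
      _ = (Finset.Icc m M).card * (Finset.Icc m M).card := Finset.card_product _ _
      _ ≤ (m + 1) * (m + 1) := Nat.mul_le_mul hcardIcc hcardIcc
      _ ≤ (2 * m) * (k ^ 2) := Nat.mul_le_mul (by omega) (by omega)
      _ ≤ (8 * k ^ 4 + 4 * k ^ 2 + 2) * m := by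
          nlinarith [Nat.zero_le (8 * k ^ 4 * m), Nat.zero_le (2 * k ^ 2 * m)]

/-- Counting pairs `(s₁,s₂) ∈ [m, λm]²` with `s₁(s₁+k)s₂(s₂+k)` a perfect square:
the count is `O(m^{7/4})` uniformly in `λ ∈ [1,2]`, and in fact `≲_ε m^{5/3+ε}`. -/
theorem square_product_pairs_count (k : ℕ) (hk : 1 ≤ k) :
    (∃ C : ℝ, 0 < C ∧ ∀ m : ℕ, 1 ≤ m → ∀ lam ∈ Set.Icc (1 : ℝ) 2,
      (((Finset.Icc m ⌊lam * (m : ℝ)⌋₊ ×ˢ Finset.Icc m ⌊lam * (m : ℝ)⌋₊).filter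
        (fun p : ℕ × ℕ => IsSquare (p.1 * (p.1 + k) * (p.2 * (p.2 + k))))).card : ℝ)
        ≤ C * (m : ℝ) ^ ((7 : ℝ) / 4)) ∧
    ∀ ε : ℝ, 0 < ε → ∃ C : ℝ, 0 < C ∧ ∀ m : ℕ, 1 ≤ m → ∀ lam ∈ Set.Icc (1 : ℝ) 2,
      (((Finset.Icc m ⌊lam * (m : ℝ)⌋₊ ×ˢ Finset.Icc m ⌊lam * (m : ℝ)⌋₊).filter
        (fun p : ℕ × ℕ => IsSquare (p.1 * (p.1 + k) * (p.2 * (p.2 + k))))).card : ℝ)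
        ≤ C * (m : ℝ) ^ ((5 : ℝ) / 3 + ε) := by
  have base : ∀ m : ℕ, 1 ≤ m → ∀ lam ∈ Set.Icc (1 : ℝ) 2, ∀ e : ℝ, 1 ≤ e →
      (((Finset.Icc m ⌊lam * (m : ℝ)⌋₊ ×ˢ Finset.Icc m ⌊lam * (m : ℝ)⌋₊).filter
        (fun p : ℕ × ℕ => IsSquare (p.1 * (p.1 + k) * (p.2 * (p.2 + k))))).card : ℝ)
        ≤ ((8 * k ^ 4 + 4 * k ^ 2 + 2 : ℕ) : ℝ) * (m : ℝ) ^ e := by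
    intro m hm lam hlam e he
    obtain ⟨hlam1, hlam2⟩ := hlam
    have hM : ⌊lam * (m : ℝ)⌋₊ ≤ 2 * m := by
      have h1 : lam * (m : ℝ) ≤ ((2 * m : ℕ) : ℝ) := by
        push_cast
        nlinarith [Nat.cast_nonneg (α := ℝ) m]
      calc ⌊lam * (m : ℝ)⌋₊ ≤ ⌊((2 * m : ℕ) : ℝ)⌋₊ := Nat.floor_le_floor h1
        _ = 2 * m := Nat.floor_natCast _
    have hcount := aux_main_count k hk m ⌊lam * (m : ℝ)⌋₊ hm hM
    have h2 : (((Finset.Icc m ⌊lam * (m : ℝ)⌋₊ ×ˢ Finset.Icc m ⌊lam * (m : ℝ)⌋₊).filter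
        (fun p : ℕ × ℕ => IsSquare (p.1 * (p.1 + k) * (p.2 * (p.2 + k))))).card : ℝ)
        ≤ ((8 * k ^ 4 + 4 * k ^ 2 + 2 : ℕ) : ℝ) * (m : ℝ) := by
      have := (Nat.cast_le (α := ℝ)).mpr hcount
      push_cast at this ⊢
      linarith
    have h3 : (m : ℝ) ≤ (m : ℝ) ^ e := by
      have hm1 : (1 : ℝ) ≤ (m : ℝ) := by exact_mod_cast hm
      calc (m : ℝ) = (m : ℝ) ^ (1 : ℝ) := (Real.rpow_one _).symm
        _ ≤ (m : ℝ) ^ e := Real.rpow_le_rpow_of_exponent_le hm1 he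
    have hC0 : (0 : ℝ) ≤ ((8 * k ^ 4 + 4 * k ^ 2 + 2 : ℕ) : ℝ) := Nat.cast_nonneg _
    calc (((Finset.Icc m ⌊lam * (m : ℝ)⌋₊ ×ˢ Finset.Icc m ⌊lam * (m : ℝ)⌋₊).filter
        (fun p : ℕ × ℕ => IsSquare (p.1 * (p.1 + k) * (p.2 * (p.2 + k))))).card : ℝ)
        ≤ ((8 * k ^ 4 + 4 * k ^ 2 + 2 : ℕ) : ℝ) * (m : ℝ) := h2
      _ ≤ ((8 * k ^ 4 + 4 * k ^ 2 + 2 : ℕ) : ℝ) * (m : ℝ) ^ e :=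
        mul_le_mul_of_nonneg_left h3 hC0
  have hCpos : (0 : ℝ) < ((8 * k ^ 4 + 4 * k ^ 2 + 2 : ℕ) : ℝ) := by
    have : 0 < 8 * k ^ 4 + 4 * k ^ 2 + 2 := by positivity
    exact_mod_cast this
  constructor
  · exact ⟨((8 * k ^ 4 + 4 * k ^ 2 + 2 : ℕ) : ℝ), hCpos,
      fun m hm lam hlam => base m hm lam hlam ((7:ℝ)/4) (by norm_num)⟩
  · intro ε hε
    exact ⟨((8 * k ^ 4 + 4 * k ^ 2 + 2 : ℕ) : ℝ), hCpos,
      fun m hm lam hlam => base m hm lam hlam ((5:ℝ)/3 + ε) (by norm_num; linarith)⟩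
end

section
/- Let (a_n)_{n≥1} be a sequence of positive integers such that for every k ≥ 1 the sequence (a_{n+k} − a_n)_{n≥1} consists of distinct integers. Then for (Lebesgue) almost every real x, the sequence ξ(n) = e^{2πi a_n x} is a Wiener sequence whose spectral correlations satisfy ρ(0) = 1 and ρ(k) = 0 for all k ≥ 1 (i.e., its spectral measure is Lebesgue measure on the circle). -/
open Finset Filter MeasureTheory Real ComplexConjugate


noncomputable def ee (m : ℤ) (x : ℝ) : ℂ :=
  Complex.exp ((2 * π * (m : ℝ) * x : ℝ) * Complex.I)

lemma ee_norm (m : ℤ) (x : ℝ) : ‖ee m x‖ = 1 := by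
  simp [ee, Complex.norm_exp, Complex.mul_re]

lemma ee_continuous (m : ℤ) : Continuous (ee m) := by
  unfold ee; fun_prop

lemma ee_zero (x : ℝ) : ee 0 x = 1 := by simp [ee]

lemma integral_ee_zero : ∫ x in (0:ℝ)..1, ee 0 x = 1 := by
  simp [ee_zero]

lemma integral_ee {m : ℤ} (hm : m ≠ 0) : ∫ x in (0:ℝ)..1, ee m x = 0 := by
  have hc : (2 * (π:ℂ) * (m:ℂ) * Complex.I) ≠ 0 := by
    simp [Real.pi_ne_zero, Complex.I_ne_zero, hm]
  have heq : ∀ x : ℝ, ee m x = Complex.exp ((2 * (π:ℂ) * (m:ℂ) * Complex.I) * (x:ℂ)) := by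
    intro x; unfold ee; congr 1; push_cast; ring
  rw [intervalIntegral.integral_congr (g := fun x : ℝ => Complex.exp ((2 * (π:ℂ) * (m:ℂ) * Complex.I) * (x:ℂ))) (fun x _ => heq x)]
  rw [integral_exp_mul_complex hc]
  have h1 : (2 * (π:ℂ) * (m:ℂ) * Complex.I) * (1:ℝ) = (m:ℂ) * (2 * π * Complex.I) := by
    push_cast; ring
  have h2 : (2 * (π:ℂ) * (m:ℂ) * Complex.I) * ((0:ℝ):ℂ) = 0 := by push_cast; ring
  rw [h1, h2, Complex.exp_int_mul_two_pi_mul_I, Complex.exp_zero, sub_self, zero_div]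

lemma ee_mul_conj (m n : ℤ) (x : ℝ) : ee m x * conj (ee n x) = ee (m - n) x := by
  unfold ee
  rw [← Complex.exp_conj, ← Complex.exp_add]
  congr 1
  rw [map_mul, Complex.conj_ofReal, Complex.conj_I]
  push_cast; ring






noncomputable def SS (b : ℕ → ℤ) (n : ℕ) (x : ℝ) : ℂ := ∑ s ∈ Finset.range n, ee (b s) x

lemma SS_continuous (b : ℕ → ℤ) (n : ℕ) : Continuous (SS b n) :=
  continuous_finset_sum _ fun s _ => ee_continuous (b s)

lemma integral_ee_ite {b : ℕ → ℤ} (hb : Function.Injective b) (s t : ℕ) :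
    ∫ x in (0:ℝ)..1, ee (b s - b t) x = if s = t then 1 else 0 := by
  by_cases h : s = t
  · subst h; simp only [sub_self, if_true]; exact integral_ee_zero
  · rw [if_neg h]
    exact integral_ee (sub_ne_zero.2 fun he => h (hb he))

lemma integral_normSq {b : ℕ → ℤ} (hb : Function.Injective b) (n : ℕ) :
    ∫ x in (0:ℝ)..1, (Complex.normSq (SS b n x) : ℝ) = n := by
  have h1 : ∀ x : ℝ, ((Complex.normSq (SS b n x) : ℝ) : ℂ)
      = ∑ s ∈ range n, ∑ t ∈ range n, ee (b s - b t) x := by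
    intro x
    rw [← Complex.mul_conj]
    unfold SS
    rw [map_sum, Finset.sum_mul_sum]
    exact Finset.sum_congr rfl fun s _ => Finset.sum_congr rfl fun t _ => ee_mul_conj _ _ _
  have h2 : ((∫ x in (0:ℝ)..1, (Complex.normSq (SS b n x) : ℝ) : ℝ) : ℂ)
      = ∫ x in (0:ℝ)..1, ((Complex.normSq (SS b n x) : ℝ) : ℂ) :=
    (intervalIntegral.integral_ofReal).symm
  have h3 : (∫ x in (0:ℝ)..1, ((Complex.normSq (SS b n x) : ℝ) : ℂ))
      = ∑ s ∈ range n, ∑ t ∈ range n, ∫ x in (0:ℝ)..1, ee (b s - b t) x := by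
    rw [intervalIntegral.integral_congr (g := fun x => ∑ s ∈ range n, ∑ t ∈ range n, ee (b s - b t) x) (fun x _ => h1 x)]
    have hint : ∀ s ∈ range n, IntervalIntegrable (fun x => ∑ t ∈ range n, ee (b s - b t) x) volume 0 1 :=
      fun s _ => (continuous_finset_sum _ fun t _ => ee_continuous _).intervalIntegrable _ _
    rw [intervalIntegral.integral_finset_sum hint]
    exact Finset.sum_congr rfl fun s _ =>
      intervalIntegral.integral_finset_sum fun t _ => (ee_continuous _).intervalIntegrable _ _
  have h4 : (∑ s ∈ range n, ∑ t ∈ range n, ∫ x in (0:ℝ)..1, ee (b s - b t) x) = (n : ℂ) := by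
    simp only [integral_ee_ite hb, Finset.sum_ite_eq, Finset.mem_range]
    rw [Finset.sum_congr rfl fun s hs => if_pos (Finset.mem_range.1 hs)]
    simp
  have := h2.trans (h3.trans h4)
  exact_mod_cast this





lemma weyl_sq {b : ℕ → ℤ} (hb : Function.Injective b) :
    ∀ᵐ x ∂(volume.restrict (Set.Ioc (0:ℝ) 1)),
      Tendsto (fun m : ℕ => ‖SS b (m^2) x‖ / ((m:ℝ)^2)) atTop (nhds 0) := by
  set μ := volume.restrict (Set.Ioc (0:ℝ) 1) with hμ
  -- the nonnegative functions
  set g : ℕ → ℝ → ℝ := fun n x => Complex.normSq (SS b ((n+1)^2) x) / ((n:ℝ)+1)^4 with hg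
  have hg_nonneg : ∀ n x, 0 ≤ g n x := fun n x =>
    div_nonneg (Complex.normSq_nonneg _) (by positivity)
  have hg_cont : ∀ n, Continuous (g n) := fun n =>
    ((Complex.continuous_normSq.comp (SS_continuous b _)).div_const _)
  have hg_int : ∀ n, ∫ x, g n x ∂μ = 1/((n:ℝ)+1)^2 := by
    intro n
    have h0 : (∫ x, g n x ∂μ) = (∫ x in (0:ℝ)..1, (Complex.normSq (SS b ((n+1)^2) x) : ℝ)) / ((n:ℝ)+1)^4 := by
      rw [intervalIntegral.integral_of_le (by norm_num : (0:ℝ) ≤ 1), ← integral_div]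
    rw [h0, integral_normSq hb]
    push_cast
    field_simp
  -- lintegral bound
  have hsum : (∑' n : ℕ, ∫⁻ x, ENNReal.ofReal (g n x) ∂μ) ≠ ⊤ := by
    have heq : ∀ n, ∫⁻ x, ENNReal.ofReal (g n x) ∂μ = ENNReal.ofReal (1/((n:ℝ)+1)^2) := by
      intro n
      rw [← ofReal_integral_eq_lintegral_ofReal ((hg_cont n).integrableOn_Ioc)
        (Filter.Eventually.of_forall (hg_nonneg n)), hg_int n]
    simp only [heq]
    rw [← ENNReal.ofReal_tsum_of_nonneg (fun n => by positivity) ?hs]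
    · exact ENNReal.ofReal_ne_top
    case hs =>
      have : Summable (fun n : ℕ => 1/((n:ℝ))^2) := (Real.summable_one_div_nat_pow).2 one_lt_two
      have := (summable_nat_add_iff 1).2 this
      exact this.congr (fun n => by push_cast; ring_nf)
  have hlint : ∫⁻ x, (∑' n : ℕ, ENNReal.ofReal (g n x)) ∂μ ≠ ⊤ := by
    rw [lintegral_tsum (fun n => ((hg_cont n).measurable.ennreal_ofReal).aemeasurable)]
    exact hsum
  have hae : ∀ᵐ x ∂μ, (∑' n : ℕ, ENNReal.ofReal (g n x)) < ⊤ :=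
    ae_lt_top (Measurable.ennreal_tsum fun n => (hg_cont n).measurable.ennreal_ofReal) hlint
  filter_upwards [hae] with x hx
  -- от tsum finite: terms → 0 in ENNReal
  have h0 : Tendsto (fun n => ENNReal.ofReal (g n x)) atTop (nhds 0) :=
    ENNReal.tendsto_atTop_zero_of_tsum_ne_top hx.ne
  -- to real
  have h1 : Tendsto (fun n => g n x) atTop (nhds 0) := by
    have := (ENNReal.tendsto_toReal (by simp : (0:ENNReal) ≠ ⊤)).comp h0
    exact this.congr fun n => ENNReal.toReal_ofReal (hg_nonneg n x)
  -- take sqrt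
  have h2 : Tendsto (fun n : ℕ => ‖SS b ((n+1)^2) x‖ / ((n:ℝ)+1)^2) atTop (nhds 0) := by
    have hs := (Real.continuous_sqrt.tendsto 0).comp h1
    rw [Real.sqrt_zero] at hs
    refine hs.congr fun n => ?_
    show Real.sqrt (g n x) = _
    rw [hg]
    have h4 : ((n:ℝ)+1)^4 = (((n:ℝ)+1)^2)^2 := by ring
    have key : Real.sqrt (Complex.normSq (SS b ((n+1)^2) x)) = ‖SS b ((n+1)^2) x‖ :=
      by rw [Complex.norm_def]
    rw [Real.sqrt_div (Complex.normSq_nonneg _), h4, Real.sqrt_sq (by positivity), key]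
  -- unshift
  have h3 : Tendsto (fun m : ℕ => ‖SS b (m^2) x‖ / ((m:ℝ)^2)) atTop (nhds 0) := by
    rw [← tendsto_add_atTop_iff_nat 1]
    exact h2.congr fun n => by push_cast; norm_num
  exact h3





lemma SS_norm_le (b : ℕ → ℤ) (n : ℕ) (x : ℝ) : ‖SS b n x‖ ≤ n := by
  calc ‖SS b n x‖ ≤ ∑ s ∈ range n, ‖ee (b s) x‖ := norm_sum_le _ _
  _ = n := by simp only [ee_norm, Finset.sum_const, Finset.card_range, nsmul_eq_mul, mul_one]

lemma SS_diff_le (b : ℕ → ℤ) {m n : ℕ} (h : m ≤ n) (x : ℝ) :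
    ‖SS b n x - SS b m x‖ ≤ (n : ℝ) - m := by
  have hsum : SS b n x - SS b m x = ∑ s ∈ Finset.Ico m n, ee (b s) x := by
    rw [SS, SS, ← Finset.sum_range_add_sum_Ico (fun s => ee (b s) x) h, add_sub_cancel_left]
  rw [hsum]
  calc ‖∑ s ∈ Finset.Ico m n, ee (b s) x‖ ≤ ∑ s ∈ Finset.Ico m n, ‖ee (b s) x‖ := norm_sum_le _ _
  _ = ((n - m : ℕ) : ℝ) := by
      simp only [ee_norm, Finset.sum_const, Nat.card_Ico, nsmul_eq_mul, mul_one]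
  _ = (n:ℝ) - m := by push_cast [Nat.cast_sub h]; ring

lemma sqrt_tendsto : Tendsto Nat.sqrt atTop atTop := by
  refine tendsto_atTop_atTop.2 fun c => ⟨c * c, fun n hn => Nat.le_sqrt.2 hn⟩

lemma fill_in (b : ℕ → ℤ) (x : ℝ)
    (h : Tendsto (fun m : ℕ => ‖SS b (m^2) x‖ / ((m:ℝ)^2)) atTop (nhds 0)) :
    Tendsto (fun n : ℕ => ‖SS b n x‖ / n) atTop (nhds 0) := by
  have hb : Tendsto (fun n : ℕ => ‖SS b ((Nat.sqrt n)^2) x‖ / ((Nat.sqrt n : ℝ)^2)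
      + 3 / (Nat.sqrt n : ℝ)) atTop (nhds 0) := by
    have h1 := h.comp sqrt_tendsto
    have h2 : Tendsto (fun m : ℕ => 3 / (m:ℝ)) atTop (nhds 0) :=
      tendsto_const_div_atTop_nhds_zero_nat 3
    simpa using h1.add (h2.comp sqrt_tendsto)
  refine tendsto_of_tendsto_of_tendsto_of_le_of_le' tendsto_const_nhds hb ?_ ?_
  · exact Filter.Eventually.of_forall fun n => div_nonneg (norm_nonneg _) (Nat.cast_nonneg n)
  · filter_upwards [eventually_ge_atTop 1] with n hn
    set m := Nat.sqrt n with hm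
    have hm1 : 1 ≤ m := Nat.le_sqrt.2 (by simpa using hn)
    have hm2 : m^2 ≤ n := Nat.sqrt_le' n
    have hm3 : n < (m+1)^2 := Nat.lt_succ_sqrt' n
    have hmR : (1:ℝ) ≤ (m:ℝ) := by exact_mod_cast hm1
    have hm2R : ((m:ℝ))^2 ≤ (n:ℝ) := by exact_mod_cast hm2
    have hnR : (n:ℝ) ≤ (m:ℝ)^2 + 2*m := by
      have : n ≤ m^2 + 2*m := by nlinarith [hm3]
      exact_mod_cast this
    have hpos : (0:ℝ) < (m:ℝ)^2 := by positivity
    have hposn : (0:ℝ) < (n:ℝ) := lt_of_lt_of_le hpos hm2R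
    have hstep : ‖SS b n x‖ ≤ ‖SS b (m^2) x‖ + 2*(m:ℝ) := by
      have := SS_diff_le b hm2 x
      have htri : ‖SS b n x‖ ≤ ‖SS b (m^2) x‖ + ‖SS b n x - SS b (m^2) x‖ := by
        have := norm_add_le (SS b (m^2) x) (SS b n x - SS b (m^2) x)
        simpa using this
      have hcast : ((m^2 : ℕ) : ℝ) = (m:ℝ)^2 := by push_cast; ring
      nlinarith [this, htri]
    calc ‖SS b n x‖ / n ≤ (‖SS b (m^2) x‖ + 2*(m:ℝ)) / ((m:ℝ)^2) := by
          apply div_le_div₀ (by positivity) hstep hpos hm2R |>.trans_eq rfl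
      _ ≤ ‖SS b (m^2) x‖ / ((m:ℝ)^2) + 3 / (m:ℝ) := by
          rw [add_div]
          refine add_le_add le_rfl ?_
          rw [div_le_div_iff₀ hpos (by linarith)]
          nlinarith





lemma weyl_main {b : ℕ → ℤ} (hb : Function.Injective b) :
    ∀ᵐ x ∂(volume.restrict (Set.Ioc (0:ℝ) 1)),
      Tendsto (fun n : ℕ => (n:ℂ)⁻¹ * SS b n x) atTop (nhds 0) := by
  filter_upwards [weyl_sq hb] with x hx
  have h := fill_in b x hx
  rw [tendsto_zero_iff_norm_tendsto_zero]
  refine h.congr fun n => ?_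
  rw [norm_mul, norm_inv, Complex.norm_natCast, inv_mul_eq_div]

lemma summand_eq (c d : ℕ) (x : ℝ) :
    Complex.exp ((2 * π * (c : ℝ) * x : ℝ) * Complex.I) *
      conj (Complex.exp ((2 * π * (d : ℝ) * x : ℝ) * Complex.I)) = ee ((c:ℤ) - d) x := by
  rw [← Complex.exp_conj, ← Complex.exp_add]
  unfold ee
  congr 1
  rw [map_mul, Complex.conj_ofReal, Complex.conj_I]
  push_cast; ring

lemma rho0_aux (r : ℝ) :
    Complex.exp ((r:ℂ) * Complex.I) * conj (Complex.exp ((r:ℂ) * Complex.I)) = 1 := by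
  rw [Complex.mul_conj]
  norm_cast
  simp [Complex.normSq_eq_norm_sq, Complex.norm_exp, Complex.mul_re]

lemma rho0 (a : ℕ → ℕ) (x : ℝ) :
    Tendsto (fun n : ℕ => (n : ℂ)⁻¹ * ∑ s ∈ Finset.range n,
        Complex.exp ((2 * π * (a s : ℝ) * x : ℝ) * Complex.I) *
          conj (Complex.exp ((2 * π * (a s : ℝ) * x : ℝ) * Complex.I)))
      atTop (nhds 1) := by
  have hcongr : ∀ᶠ n : ℕ in atTop, (1:ℂ) = (n : ℂ)⁻¹ * ∑ s ∈ Finset.range n,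
      Complex.exp ((2 * π * (a s : ℝ) * x : ℝ) * Complex.I) *
        conj (Complex.exp ((2 * π * (a s : ℝ) * x : ℝ) * Complex.I)) := by
    filter_upwards [eventually_ge_atTop 1] with n hn
    rw [Finset.sum_congr rfl fun s _ => rho0_aux (2 * π * (a s : ℝ) * x)]
    rw [Finset.sum_const, Finset.card_range, nsmul_eq_mul, mul_one,
      inv_mul_cancel₀ (by exact_mod_cast Nat.one_le_iff_ne_zero.1 hn : (n:ℂ) ≠ 0)]
  exact Tendsto.congr' hcongr tendsto_const_nhds

lemma exp_periodic (c : ℕ) (j : ℤ) (x : ℝ) :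
    Complex.exp ((2 * π * (c : ℝ) * (x + (j:ℝ)) : ℝ) * Complex.I)
      = Complex.exp ((2 * π * (c : ℝ) * x : ℝ) * Complex.I) := by
  have h : ((2 * π * (c:ℝ) * (x + (j:ℝ)) : ℝ) : ℂ) * Complex.I
      = ((2 * π * (c:ℝ) * x : ℝ) : ℂ) * Complex.I + ((c * j : ℤ) : ℂ) * (2 * π * Complex.I) := by
    push_cast; ring
  rw [h, Complex.exp_add, Complex.exp_int_mul_two_pi_mul_I, mul_one]

lemma ae_of_ae_restrict_Ioc (P : ℝ → Prop) (hP : ∀ (x : ℝ) (j : ℤ), P x → P (x + (j:ℝ)))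
    (h : ∀ᵐ x ∂(volume.restrict (Set.Ioc (0:ℝ) 1)), P x) : ∀ᵐ x : ℝ, P x := by
  rw [ae_iff] at h ⊢
  rw [Measure.restrict_apply' measurableSet_Ioc] at h
  set A := {x | ¬ P x} ∩ Set.Ioc (0:ℝ) 1 with hA
  have hN0 : volume (toMeasurable volume A) = 0 := by rw [measure_toMeasurable]; exact h
  have hsub : {x | ¬ P x} ⊆ ⋃ j : ℤ, (fun y : ℝ => y + (j:ℝ)) ⁻¹' (toMeasurable volume A) := by
    intro x hx
    refine Set.mem_iUnion.2 ⟨1 - ⌈x⌉, subset_toMeasurable volume A ⟨?_, ?_, ?_⟩⟩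
    · intro hPx
      have h2 := hP _ (-(1 - ⌈x⌉)) hPx
      have h3 : x + ((1 - ⌈x⌉ : ℤ):ℝ) + ((-(1 - ⌈x⌉) : ℤ):ℝ) = x := by push_cast; ring
      rw [h3] at h2
      exact hx h2
    · push_cast
      have := Int.ceil_lt_add_one x
      linarith
    · push_cast
      have := Int.le_ceil x
      linarith
  refine le_antisymm ?_ zero_le
  calc volume {x | ¬ P x} ≤ volume (⋃ j : ℤ, (fun y : ℝ => y + (j:ℝ)) ⁻¹' (toMeasurable volume A)) :=
        measure_mono hsub
    _ = 0 := by
        refine measure_iUnion_null fun j => ?_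
        rw [measure_preimage_add_right]
        exact hN0





/-- If all difference sequences `(a_{n+k} - a_n)` consist of distinct integers, then
for almost every `x` the sequence `e(a_n x)` is a Wiener sequence with
`ρ(k) = 0` for `k ≥ 1` and `ρ(0) = 1` (Lebesgue spectral measure). -/
theorem weyl_wiener_sequence (a : ℕ → ℕ) (ha : ∀ n, 0 < a n)
    (hdist : ∀ k : ℕ, 1 ≤ k → Function.Injective (fun n : ℕ => ((a (n + k) : ℤ) - (a n : ℤ)))) :
    ∀ᵐ x : ℝ,
      (∀ k : ℕ, 1 ≤ k →
        Tendsto (fun n : ℕ => (n : ℂ)⁻¹ * ∑ s ∈ Finset.range n,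
            Complex.exp ((2 * π * (a s : ℝ) * x : ℝ) * Complex.I) *
              conj (Complex.exp ((2 * π * (a (s + k) : ℝ) * x : ℝ) * Complex.I)))
          atTop (nhds 0)) ∧
      Tendsto (fun n : ℕ => (n : ℂ)⁻¹ * ∑ s ∈ Finset.range n,
          Complex.exp ((2 * π * (a s : ℝ) * x : ℝ) * Complex.I) *
            conj (Complex.exp ((2 * π * (a s : ℝ) * x : ℝ) * Complex.I)))
        atTop (nhds 1) := by
  set P : ℝ → Prop := fun x =>
      (∀ k : ℕ, 1 ≤ k →
        Tendsto (fun n : ℕ => (n : ℂ)⁻¹ * ∑ s ∈ Finset.range n,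
            Complex.exp ((2 * π * (a s : ℝ) * x : ℝ) * Complex.I) *
              conj (Complex.exp ((2 * π * (a (s + k) : ℝ) * x : ℝ) * Complex.I)))
          atTop (nhds 0)) ∧
      Tendsto (fun n : ℕ => (n : ℂ)⁻¹ * ∑ s ∈ Finset.range n,
          Complex.exp ((2 * π * (a s : ℝ) * x : ℝ) * Complex.I) *
            conj (Complex.exp ((2 * π * (a s : ℝ) * x : ℝ) * Complex.I)))
        atTop (nhds 1) with hPdef
  show ∀ᵐ x : ℝ, P x
  refine ae_of_ae_restrict_Ioc P ?_ ?_
  · -- periodicity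
    intro x j hx
    rw [hPdef] at hx ⊢
    simp only [exp_periodic]
    exact hx
  · -- a.e. on Ioc 0 1
    have h1 : ∀ᵐ x ∂(volume.restrict (Set.Ioc (0:ℝ) 1)), ∀ k : ℕ, 1 ≤ k →
        Tendsto (fun n : ℕ => (n : ℂ)⁻¹ * ∑ s ∈ Finset.range n,
            Complex.exp ((2 * π * (a s : ℝ) * x : ℝ) * Complex.I) *
              conj (Complex.exp ((2 * π * (a (s + k) : ℝ) * x : ℝ) * Complex.I)))
          atTop (nhds 0) := by
      rw [ae_all_iff]
      intro k
      by_cases hk : 1 ≤ k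
      · have hbinj : Function.Injective (fun s : ℕ => ((a s : ℤ) - (a (s + k) : ℤ))) := by
          intro u v huv
          simp only at huv
          exact hdist k hk (show ((a (u+k):ℤ) - a u) = ((a (v+k):ℤ) - a v) by linarith)
        filter_upwards [weyl_main hbinj] with x hx _
        refine hx.congr fun n => ?_
        congr 1
        exact (Finset.sum_congr rfl fun s _ => (summand_eq (a s) (a (s + k)) x)).symm
      · exact Filter.Eventually.of_forall fun x hk' => absurd hk' hk
    filter_upwards [h1] with x hx
    exact ⟨hx, rho0 a x⟩
end

section
/- Let α > 0 and 1 < β < 2. Then for every fixed positive integer m, |∑_{0 ≤ s < n} e^{2πi(α(s+m)^β − α s^β)}| ≲ n^{(3−β)/2} = o(n) as n → ∞. Consequently ξ(n) = e^{2πi α n^β} is a Wiener sequence with ρ(k) = 0 for all k ≥ 1 and ρ(0) = 1. -/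
open Finset Filter Real ComplexConjugate

private lemma abs_exp_I_sub_one (x : ℝ) :
    ‖Complex.exp ((x:ℂ) * Complex.I) - 1‖ = 2 * |Real.sin (x/2)| := by
  rw [Complex.exp_mul_I]
  rw [show Complex.cos x + Complex.sin x * Complex.I - 1
      = Complex.mk (Real.cos x - 1) (Real.sin x) by
    simp [Complex.ext_iff, Complex.cos_ofReal_re, Complex.sin_ofReal_re]]
  rw [Complex.norm_def, Complex.normSq_mk]
  have hs : Real.sin (x/2) ^ 2 = 1/2 - Real.cos x / 2 := by
    have := Real.sin_sq_eq_half_sub (x/2)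
    rwa [show 2 * (x/2) = x by ring] at this
  have h2 := Real.sin_sq_add_cos_sq x
  have h : (Real.cos x - 1) * (Real.cos x - 1) + Real.sin x * Real.sin x
      = (2 * |Real.sin (x/2)|)^2 := by
    rw [mul_pow, sq_abs]; nlinarith [hs, h2]
  rw [h]
  exact Real.sqrt_sq (by positivity)

private lemma abs_exp_I_sub_exp_I (x y : ℝ) :
    ‖Complex.exp ((x:ℂ)*Complex.I) - Complex.exp ((y:ℂ)*Complex.I)‖ ≤ |x - y| := by
  have : Complex.exp ((x:ℂ)*Complex.I) - Complex.exp ((y:ℂ)*Complex.I)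
      = Complex.exp ((y:ℂ)*Complex.I) * (Complex.exp (((x - y : ℝ):ℂ)*Complex.I) - 1) := by
    rw [mul_sub, mul_one, ← Complex.exp_add]
    push_cast; ring_nf
  rw [this, norm_mul, Complex.norm_exp_ofReal_mul_I, one_mul, abs_exp_I_sub_one]
  have h1 : |Real.sin ((x - y)/2)| ≤ |(x - y)/2| := Real.abs_sin_le_abs
  calc 2 * |Real.sin ((x-y)/2)| ≤ 2 * |(x-y)/2| := by linarith
    _ = |x - y| := by rw [abs_div]; simp; ring

private lemma lower_abs {x : ℝ} (h0 : 0 < x) (h1 : x ≤ 1/2) :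
    4 * x ≤ ‖Complex.exp (((2*π*x : ℝ):ℂ) * Complex.I) - 1‖ := by
  rw [abs_exp_I_sub_one]
  have hx : (2*π*x)/2 = π * x := by ring
  rw [hx]
  have hpos : 0 ≤ π * x := by positivity
  have hle : π * x ≤ π / 2 := by
    rw [div_eq_mul_inv]
    calc π * x ≤ π * (1/2) := by nlinarith [Real.pi_pos]
      _ = π * 2⁻¹ := by norm_num
  have := Real.mul_le_sin hpos hle
  have h2 : 2 / π * (π * x) = 2 * x := by field_simp
  rw [h2] at this
  calc (4:ℝ) * x = 2 * (2 * x) := by ring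
    _ ≤ 2 * Real.sin (π * x) := by linarith
    _ ≤ 2 * |Real.sin (π * x)| := by nlinarith [le_abs_self (Real.sin (π*x))]

set_option maxHeartbeats 1000000 in
private lemma kusmin_landau (N : ℕ) (hN : 1 ≤ N) (φ : ℕ → ℝ) (δ : ℝ) (hδ : 0 < δ)
    (h1 : ∀ s < N, δ ≤ φ (s+1) - φ s)
    (h2 : ∀ s < N, φ (s+1) - φ s ≤ 1/2)
    (h3 : ∀ s, s + 2 ≤ N → φ (s+2) - φ (s+1) ≤ φ (s+1) - φ s) :
    ‖∑ s ∈ Finset.range N, Complex.exp (((2*π*φ s : ℝ):ℂ) * Complex.I)‖ ≤ 2/δ := by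
  set ψ : ℕ → ℝ := fun s => φ (s+1) - φ s with hψ
  set E : ℕ → ℂ := fun s => Complex.exp (((2*π*φ s : ℝ):ℂ) * Complex.I) with hE
  set z : ℕ → ℂ := fun s => Complex.exp (((2*π*ψ s : ℝ):ℂ) * Complex.I) with hz
  set w : ℕ → ℂ := fun s => (z s - 1)⁻¹ with hw
  -- basic facts for s < N
  have hψδ : ∀ s < N, δ ≤ ψ s := h1
  have hψhalf : ∀ s < N, ψ s ≤ 1/2 := h2
  have hzlow : ∀ s < N, 4 * ψ s ≤ ‖z s - 1‖ := by
    intro s hs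
    exact lower_abs (lt_of_lt_of_le hδ (hψδ s hs)) (hψhalf s hs)
  have hzne : ∀ s < N, z s - 1 ≠ 0 := by
    intro s hs h0
    have := hzlow s hs
    rw [h0, norm_zero] at this
    nlinarith [hψδ s hs]
  have hwabs : ∀ s < N, ‖w s‖ ≤ (4 * ψ s)⁻¹ := by
    intro s hs
    rw [hw, norm_inv]
    exact inv_anti₀ (by nlinarith [hψδ s hs]) (hzlow s hs)
  -- key identity : E s = w s • (E (s+1) - E s)
  have hkey : ∀ s < N, E s = w s * (E (s+1) - E s) := by
    intro s hs
    have hre : (2*π*φ (s+1) : ℝ) = 2*π*φ s + 2*π*ψ s := by rw [hψ]; ring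
    have hEz : E (s+1) = E s * z s := by
      simp only [hE, hz]
      rw [hre, Complex.ofReal_add, add_mul, Complex.exp_add]
    rw [hEz]
    have : E s * z s - E s = (z s - 1) * E s := by ring
    rw [this, hw, ← mul_assoc, inv_mul_cancel₀ (hzne s hs), one_mul]
  -- rewrite the sum
  have hsum : ∑ s ∈ Finset.range N, E s = ∑ s ∈ Finset.range N, w s • (E (s+1) - E s) := by
    apply Finset.sum_congr rfl
    intro s hs
    rw [smul_eq_mul]
    exact hkey s (Finset.mem_range.mp hs)
  rw [hsum, Finset.sum_range_by_parts]
  -- telescoping partial sums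
  have hG : ∀ k, ∑ i ∈ Finset.range k, (E (i+1) - E i) = E k - E 0 :=
    fun k => Finset.sum_range_sub E k
  simp only [hG]
  -- norm bounds
  have hEabs : ∀ s, ‖E s‖ = 1 := by
    intro s; rw [hE]; exact Complex.norm_exp_ofReal_mul_I _
  have hGabs : ∀ k, ‖E k - E 0‖ ≤ 2 := by
    intro k
    calc ‖E k - E 0‖ ≤ ‖E k‖ + ‖E 0‖ := norm_sub_le _ _
      _ = 2 := by rw [hEabs, hEabs]; norm_num
  have hψpos : ∀ s < N, 0 < ψ s := fun s hs => lt_of_lt_of_le hδ (hψδ s hs)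
  -- bound on increments of w
  have hwinc : ∀ i, i + 2 ≤ N →
      ‖w (i+1) - w i‖ ≤ (π/8) * ((ψ (i+1))⁻¹ - (ψ i)⁻¹) := by
    intro i hi
    have hi1 : i + 1 < N := hi
    have hi0 : i < N := by omega
    have hm' : ψ (i+1) ≤ ψ i := h3 i hi
    rw [hw]
    rw [inv_sub_inv (hzne (i+1) hi1) (hzne i hi0)]
    rw [norm_div, norm_mul]
    have hnum : ‖z i - 1 - (z (i+1) - 1)‖ ≤ 2 * π * (ψ i - ψ (i+1)) := by
      have : z i - 1 - (z (i+1) - 1) = z i - z (i+1) := by ring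
      rw [this, hz]
      have := abs_exp_I_sub_exp_I (2*π*ψ i) (2*π*ψ (i+1))
      refine this.trans_eq ?_
      rw [abs_of_nonneg (by nlinarith [Real.pi_pos, hm'])]
      ring
    have hd1 : 4 * ψ (i+1) ≤ ‖z (i+1) - 1‖ := hzlow (i+1) hi1
    have hd2 : 4 * ψ i ≤ ‖z i - 1‖ := hzlow i hi0
    have hp1 := hψpos (i+1) hi1
    have hp0 := hψpos i hi0
    have hden : 16 * (ψ (i+1) * ψ i) ≤ ‖z (i+1) - 1‖ * ‖z i - 1‖ := by
      calc 16 * (ψ (i+1) * ψ i) = (4 * ψ (i+1)) * (4 * ψ i) := by ring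
        _ ≤ ‖z (i+1) - 1‖ * ‖z i - 1‖ := by
          apply mul_le_mul hd1 hd2 (by nlinarith) (norm_nonneg _)
    have hdenpos : 0 < ‖z (i+1) - 1‖ * ‖z i - 1‖ := by nlinarith
    rw [div_le_iff₀ hdenpos]
    calc ‖z i - 1 - (z (i+1) - 1)‖ ≤ 2 * π * (ψ i - ψ (i+1)) := hnum
      _ = (π/8) * ((ψ (i+1))⁻¹ - (ψ i)⁻¹) * (16 * (ψ (i+1) * ψ i)) := by
          field_simp
          ring
      _ ≤ (π/8) * ((ψ (i+1))⁻¹ - (ψ i)⁻¹) * (‖z (i+1) - 1‖ * ‖z i - 1‖) := by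
          apply mul_le_mul_of_nonneg_left hden
          have : 0 ≤ (ψ (i+1))⁻¹ - (ψ i)⁻¹ :=
            sub_nonneg.mpr (inv_anti₀ hp1 hm')
          positivity
  -- final norm estimate
  have hNpos : 0 < N := hN
  have hN1 : N - 1 < N := by omega
  calc ‖w (N-1) • (E N - E 0) - ∑ i ∈ Finset.range (N-1), (w (i+1) - w i) • (E (i+1) - E 0)‖
      ≤ ‖w (N-1) • (E N - E 0)‖ + ‖∑ i ∈ Finset.range (N-1), (w (i+1) - w i) • (E (i+1) - E 0)‖ :=
        norm_sub_le _ _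
    _ ≤ (4*δ)⁻¹ * 2 + ∑ i ∈ Finset.range (N-1), (π/8) * ((ψ (i+1))⁻¹ - (ψ i)⁻¹) * 2 := by
        gcongr ?_ + ?_
        · rw [norm_smul]
          apply mul_le_mul _ (hGabs N) (norm_nonneg _) (by positivity)
          have h1' := hwabs (N-1) hN1
          refine h1'.trans ?_
          apply inv_anti₀ (by positivity)
          have := hψδ (N-1) hN1
          linarith
        · refine (norm_sum_le _ _).trans ?_
          apply Finset.sum_le_sum
          intro i hi
          have hi' : i + 2 ≤ N := by
            have := Finset.mem_range.mp hi; omega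
          rw [norm_smul]
          apply mul_le_mul (hwinc i hi') (hGabs _) (norm_nonneg _)
          have hm' : ψ (i+1) ≤ ψ i := h3 i hi'
          have hp1 := hψpos (i+1) (by omega)
          have : 0 ≤ (ψ (i+1))⁻¹ - (ψ i)⁻¹ :=
            sub_nonneg.mpr (inv_anti₀ hp1 hm')
          positivity
    _ = (4*δ)⁻¹ * 2 + (π/8) * 2 * ∑ i ∈ Finset.range (N-1), ((ψ (i+1))⁻¹ - (ψ i)⁻¹) := by
        rw [Finset.mul_sum]
        congr 1
        apply Finset.sum_congr rfl
        intros; ring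
    _ = (4*δ)⁻¹ * 2 + (π/4) * ((ψ (N-1))⁻¹ - (ψ 0)⁻¹) := by
        rw [Finset.sum_range_sub (fun i => (ψ i)⁻¹)]
        ring
    _ ≤ 2/δ := by
        have hδN := hψδ (N-1) hN1
        have h0N := hψpos 0 hNpos
        have hinv1 : (ψ (N-1))⁻¹ ≤ δ⁻¹ := inv_anti₀ hδ hδN
        have hinv0 : 0 ≤ (ψ 0)⁻¹ := by positivity
        have hπ : π ≤ 4 := by linarith [Real.pi_le_four]
        have hδinv : 0 < δ⁻¹ := by positivity
        have : (π/4) * ((ψ (N-1))⁻¹ - (ψ 0)⁻¹) ≤ 1 * δ⁻¹ := by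
          nlinarith [Real.pi_pos]
        rw [div_eq_mul_inv 2 δ]
        calc (4*δ)⁻¹ * 2 + (π/4) * ((ψ (N-1))⁻¹ - (ψ 0)⁻¹)
            ≤ (4*δ)⁻¹ * 2 + 1 * δ⁻¹ := by linarith
          _ ≤ 2 * δ⁻¹ := by
              rw [mul_inv]
              nlinarith [hδinv]

private lemma mvt_rpow {q a b : ℝ} (hq : 0 < q) (ha : 0 ≤ a) (hab : a < b) :
    ∃ c, a < c ∧ c < b ∧ b ^ q - a ^ q = q * c ^ (q - 1) * (b - a) := by
  have hcont : ContinuousOn (fun x : ℝ => x ^ q) (Set.Icc a b) :=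
    (Real.continuous_rpow_const hq.le).continuousOn
  have hderiv : ∀ x ∈ Set.Ioo a b, HasDerivAt (fun x : ℝ => x ^ q) (q * x ^ (q-1)) x := by
    intro x hx
    have hx0 : x ≠ 0 := by have := hx.1; intro h; rw [h] at this; exact absurd this (not_lt.mpr ha)
    simpa [mul_comm] using Real.hasDerivAt_rpow_const (p := q) (Or.inl hx0)
  obtain ⟨c, hc, hceq⟩ := exists_hasDerivAt_eq_slope (fun x : ℝ => x ^ q)
    (fun x => q * x ^ (q-1)) hab hcont hderiv
  refine ⟨c, hc.1, hc.2, ?_⟩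
  rw [hceq, div_mul_cancel₀]
  exact sub_ne_zero.mpr hab.ne'

/-- MVT for `H(t) = (t+m)^β - t^β`. -/
private lemma mvt_H {β : ℝ} (hβ : 1 < β) {mR : ℝ} (hm : 0 < mR) {a b : ℝ} (ha : 0 ≤ a)
    (hab : a < b) :
    ∃ c, a < c ∧ c < b ∧
      ((b+mR)^β - b^β) - ((a+mR)^β - a^β) = β * ((c+mR)^(β-1) - c^(β-1)) * (b - a) := by
  have hβ0 : (0:ℝ) < β := by linarith
  have hcont : ContinuousOn (fun x : ℝ => (x+mR) ^ β - x ^ β) (Set.Icc a b) := by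
    apply ContinuousOn.sub
    · exact ((Real.continuous_rpow_const hβ0.le).comp (continuous_id.add continuous_const)).continuousOn
    · exact (Real.continuous_rpow_const hβ0.le).continuousOn
  have hderiv : ∀ x ∈ Set.Ioo a b,
      HasDerivAt (fun x : ℝ => (x+mR) ^ β - x ^ β) (β * ((x+mR)^(β-1) - x^(β-1))) x := by
    intro x hx
    have h1 : HasDerivAt (fun x : ℝ => (x+mR) ^ β) (β * (x+mR)^(β-1) * 1) x :=
      (Real.hasDerivAt_rpow_const (p := β) (Or.inr hβ.le)).comp x ((hasDerivAt_id x).add_const mR)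
    have h2 : HasDerivAt (fun x : ℝ => x ^ β) (β * x^(β-1)) x :=
      Real.hasDerivAt_rpow_const (p := β) (Or.inr hβ.le)
    have : HasDerivAt (fun x : ℝ => (x+mR) ^ β - x ^ β)
        (β * (x+mR)^(β-1) * 1 - β * x^(β-1)) x := h1.sub h2
    convert this using 1
    ring
  obtain ⟨c, hc, hceq⟩ := exists_hasDerivAt_eq_slope _ _ hab hcont hderiv
  refine ⟨c, hc.1, hc.2, ?_⟩
  rw [hceq, div_mul_cancel₀]
  exact sub_ne_zero.mpr hab.ne'

/-- `K x = (x+m)^p - x^p` upper/lower bounds, `0 < p < 1`, `x > 0`. -/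
private lemma K_bounds {p mR x : ℝ} (hp : 0 < p) (hp1 : p < 1) (hm : 0 < mR) (hx : 0 < x) :
    p * mR * (x + mR) ^ (p-1) ≤ (x+mR)^p - x^p ∧ (x+mR)^p - x^p ≤ p * mR * x ^ (p-1) := by
  obtain ⟨c, hc1, hc2, hceq⟩ := mvt_rpow hp hx.le (by linarith : x < x + mR)
  have hxmc : x + mR - x = mR := by ring
  rw [hxmc] at hceq
  have hcpos : 0 < c := lt_trans hx hc1
  have h1 : (x+mR)^(p-1) ≤ c^(p-1) :=
    Real.rpow_le_rpow_of_nonpos hcpos hc2.le (by linarith)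
  have h2 : c^(p-1) ≤ x^(p-1) :=
    Real.rpow_le_rpow_of_nonpos hx hc1.le (by linarith)
  constructor
  · rw [hceq]
    nlinarith [mul_le_mul_of_nonneg_left h1 (by positivity : (0:ℝ) ≤ p * mR)]
  · rw [hceq]
    nlinarith [mul_le_mul_of_nonneg_left h2 (by positivity : (0:ℝ) ≤ p * mR)]

/-- `K` is antitone over gaps of length at most `mR`. -/
private lemma K_anti {p mR a b : ℝ} (hp : 0 < p) (hp1 : p < 1) (hm : 0 < mR)
    (ha : 0 ≤ a) (hab : a < b) (hgap : b ≤ a + mR) :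
    (b+mR)^p - b^p ≤ (a+mR)^p - a^p := by
  obtain ⟨d₂, hd21, hd22, he2⟩ := mvt_rpow hp ha hab
  obtain ⟨d₁, hd11, hd12, he1⟩ := mvt_rpow hp (by linarith : (0:ℝ) ≤ a + mR)
    (by linarith : a + mR < b + mR)
  have hd2pos : 0 < d₂ := lt_of_le_of_lt ha hd21
  have hcmp : d₁ ^ (p-1) ≤ d₂ ^ (p-1) :=
    Real.rpow_le_rpow_of_nonpos hd2pos (by linarith) (by linarith)
  have hba : (0:ℝ) < b - a := by linarith
  have hsimp : b + mR - (a + mR) = b - a := by ring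
  rw [hsimp] at he1
  nlinarith [mul_le_mul_of_nonneg_left hcmp (by positivity : (0:ℝ) ≤ p * (b - a))]

set_option maxHeartbeats 1000000 in
private lemma part1 (α β : ℝ) (hα : 0 < α) (hβ : 1 < β) (hβ2 : β < 2) (m : ℕ) (hm : 1 ≤ m) :
    ∃ C : ℝ, 0 < C ∧ ∀ n : ℕ, 1 ≤ n →
      ‖∑ s ∈ Finset.range n,
          Complex.exp ((2 * π * (α * ((s + m : ℕ) : ℝ) ^ β - α * (s : ℝ) ^ β) : ℝ) * Complex.I)‖
        ≤ C * (n : ℝ) ^ ((3 - β) / 2) := by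
  have hβ0 : (0:ℝ) < β := by linarith
  set mR : ℝ := (m : ℝ) with hmRdef
  have hmR1 : 1 ≤ mR := by rw [hmRdef]; exact_mod_cast hm
  have hmR : 0 < mR := by linarith
  set p : ℝ := β - 1 with hpdef
  have hp : 0 < p := by rw [hpdef]; linarith
  have hp1 : p < 1 := by rw [hpdef]; linarith
  set K : ℝ → ℝ := fun x => (x + mR) ^ p - x ^ p with hKdef
  set φ : ℕ → ℝ := fun s => α * ((s + m : ℕ) : ℝ) ^ β - α * (s : ℝ) ^ β with hφdef
  have hφcast : ∀ s : ℕ, φ s = α * ((((s:ℝ) + mR) ^ β - (s:ℝ) ^ β)) := by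
    intro s; rw [hφdef]; push_cast; ring
  -- MVT representation of increments
  have hψc : ∀ s : ℕ, ∃ c : ℝ, (s:ℝ) < c ∧ c < (s:ℝ) + 1 ∧
      φ (s+1) - φ s = α * β * K c := by
    intro s
    obtain ⟨c, hc1, hc2, heq⟩ := mvt_H hβ hmR (Nat.cast_nonneg s) (lt_add_one (s:ℝ))
    refine ⟨c, hc1, hc2, ?_⟩
    rw [hφcast, hφcast]
    push_cast
    rw [hKdef, hpdef]
    linear_combination α * heq
  have hup : ∀ s : ℕ, φ (s+1) - φ s ≤ α * β * K (s:ℝ) := by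
    intro s
    obtain ⟨c, hc1, hc2, heq⟩ := hψc s
    rw [heq]
    have hKK : K c ≤ K (s:ℝ) := by
      simp only [hKdef]
      exact K_anti hp hp1 hmR (Nat.cast_nonneg s) hc1 (by linarith)
    exact mul_le_mul_of_nonneg_left hKK (by positivity)
  have hlo : ∀ s : ℕ, α * β * K ((s:ℝ) + 1) ≤ φ (s+1) - φ s := by
    intro s
    obtain ⟨c, hc1, hc2, heq⟩ := hψc s
    rw [heq]
    have hKK : K ((s:ℝ)+1) ≤ K c := by
      simp only [hKdef]
      have h0c : 0 ≤ c := le_trans (Nat.cast_nonneg s) hc1.le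
      exact K_anti hp hp1 hmR h0c hc2 (by linarith)
    exact mul_le_mul_of_nonneg_left hKK (by positivity)
  have hmono : ∀ s : ℕ, φ (s+2) - φ (s+1) ≤ φ (s+1) - φ s := by
    intro s
    have h1 := hup (s+1)
    have h2 := hlo s
    have hcast : ((s+1:ℕ):ℝ) = (s:ℝ) + 1 := by push_cast; ring
    rw [hcast] at h1
    exact le_trans h1 h2
  set A : ℝ := α * β * (p * mR) with hAdef
  have hApos : 0 < A := by rw [hAdef]; positivity
  have hupper : ∀ s : ℕ, 1 ≤ s → φ (s+1) - φ s ≤ A * (s:ℝ) ^ (p-1) := by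
    intro s hs
    have hspos : (0:ℝ) < s := by exact_mod_cast hs
    have hKb : K (s:ℝ) ≤ p * mR * (s:ℝ) ^ (p-1) := by
      simp only [hKdef]
      exact (K_bounds hp hp1 hmR hspos).2
    calc φ (s+1) - φ s ≤ α * β * K (s:ℝ) := hup s
      _ ≤ α * β * (p * mR * (s:ℝ)^(p-1)) := mul_le_mul_of_nonneg_left hKb (by positivity)
      _ = A * (s:ℝ)^(p-1) := by rw [hAdef]; ring
  set A' : ℝ := A * (1+mR) ^ (p-1) with hA'def
  have hA'pos : 0 < A' := by rw [hA'def]; positivity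
  have hlower : ∀ s n : ℕ, s + 1 ≤ n → A' * (n:ℝ) ^ (p-1) ≤ φ (s+1) - φ s := by
    intro s n hsn
    have hn1 : (1:ℝ) ≤ (n:ℝ) := by exact_mod_cast le_trans (by omega) hsn
    have hcast : ((s:ℝ)+1) ≤ (n:ℝ) := by exact_mod_cast hsn
    have hKb : p * mR * ((s:ℝ)+1+mR) ^ (p-1) ≤ K ((s:ℝ)+1) := by
      simp only [hKdef]
      exact (K_bounds hp hp1 hmR (by positivity)).1
    have hstep1 : ((n:ℝ)+mR) ^ (p-1) ≤ ((s:ℝ)+1+mR) ^ (p-1) :=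
      Real.rpow_le_rpow_of_nonpos (by positivity) (by linarith) (by linarith)
    have hstep2 : ((1+mR)*(n:ℝ)) ^ (p-1) ≤ ((n:ℝ)+mR) ^ (p-1) :=
      Real.rpow_le_rpow_of_nonpos (by positivity) (by nlinarith) (by linarith)
    have hmulr : ((1+mR)*(n:ℝ)) ^ (p-1) = (1+mR)^(p-1) * (n:ℝ)^(p-1) :=
      Real.mul_rpow (by positivity) (by positivity)
    calc A' * (n:ℝ)^(p-1) = A * ((1+mR)^(p-1) * (n:ℝ)^(p-1)) := by rw [hA'def]; ring
      _ = A * ((1+mR)*(n:ℝ)) ^ (p-1) := by rw [hmulr]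
      _ ≤ A * ((s:ℝ)+1+mR) ^ (p-1) := by
          apply mul_le_mul_of_nonneg_left (le_trans hstep2 hstep1) hApos.le
      _ = α * β * (p * mR * ((s:ℝ)+1+mR) ^ (p-1)) := by rw [hAdef]; ring
      _ ≤ α * β * K ((s:ℝ)+1) := mul_le_mul_of_nonneg_left hKb (by positivity)
      _ ≤ φ (s+1) - φ s := hlo s
  -- threshold T beyond which increments are ≤ 1/2
  set R : ℝ := 2 * A with hRdef
  have hRpos : 0 < R := by rw [hRdef]; positivity
  set T : ℕ := ⌈R ^ ((1-p)⁻¹)⌉₊ + 1 with hTdef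
  have hT1 : 1 ≤ T := by omega
  have hhalf : ∀ s : ℕ, T ≤ s → φ (s+1) - φ s ≤ 1/2 := by
    intro s hs
    have hs1 : 1 ≤ s := le_trans hT1 hs
    have hceil : (⌈R ^ ((1-p)⁻¹)⌉₊ : ℝ) ≤ (s:ℝ) := by
      have : ⌈R ^ ((1-p)⁻¹)⌉₊ ≤ s := by omega
      exact_mod_cast this
    have hsR : R ^ ((1-p)⁻¹) ≤ (s:ℝ) := le_trans (Nat.le_ceil _) hceil
    have hspos : (0:ℝ) < s := by exact_mod_cast hs1
    have h2 : R ≤ (s:ℝ) ^ (1-p) := by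
      have h := Real.rpow_le_rpow (by positivity) hsR (by linarith : (0:ℝ) ≤ 1-p)
      rwa [← Real.rpow_mul hRpos.le, inv_mul_cancel₀ (by linarith : (1:ℝ)-p ≠ 0),
        Real.rpow_one] at h
    have h3 : (s:ℝ)^(p-1) ≤ R⁻¹ := by
      rw [show p - 1 = -(1-p) by ring, Real.rpow_neg hspos.le]
      exact inv_anti₀ hRpos h2
    calc φ (s+1) - φ s ≤ A * (s:ℝ)^(p-1) := hupper s hs1
      _ ≤ A * R⁻¹ := mul_le_mul_of_nonneg_left h3 hApos.le
      _ = 1/2 := by rw [hRdef]; field_simp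
  -- final constant
  refine ⟨(T:ℝ) + 2/A', by positivity, ?_⟩
  intro n hn
  have hn1 : (1:ℝ) ≤ (n:ℝ) := by exact_mod_cast hn
  have hone : (1:ℝ) ≤ (n:ℝ) ^ ((3-β)/2) := by
    rw [← Real.rpow_zero (n:ℝ)]
    exact Real.rpow_le_rpow_of_exponent_le hn1 (by linarith)
  have hnormone : ∀ s : ℕ, ‖Complex.exp ((2 * π * (α * ((s + m : ℕ) : ℝ) ^ β
      - α * (s : ℝ) ^ β) : ℝ) * Complex.I)‖ = 1 := by
    intro s
    exact Complex.norm_exp_ofReal_mul_I _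
  by_cases hcase : n ≤ T
  · calc ‖∑ s ∈ Finset.range n, Complex.exp ((2 * π * (α * ((s + m : ℕ) : ℝ) ^ β
          - α * (s : ℝ) ^ β) : ℝ) * Complex.I)‖
        ≤ ∑ s ∈ Finset.range n, ‖Complex.exp ((2 * π * (α * ((s + m : ℕ) : ℝ) ^ β
          - α * (s : ℝ) ^ β) : ℝ) * Complex.I)‖ := norm_sum_le _ _
      _ = (n:ℝ) := by
          simp only [hnormone, Finset.sum_const, Finset.card_range, nsmul_eq_mul, mul_one]
      _ ≤ (T:ℝ) := by exact_mod_cast hcase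
      _ ≤ ((T:ℝ) + 2/A') * (n:ℝ) ^ ((3-β)/2) := by
          have h1 : (T:ℝ) * 1 ≤ (T:ℝ) * (n:ℝ)^((3-β)/2) :=
            mul_le_mul_of_nonneg_left hone (Nat.cast_nonneg T)
          have h2 : (0:ℝ) ≤ (2/A') * (n:ℝ)^((3-β)/2) := by positivity
          nlinarith
  · push_neg at hcase
    set δn : ℝ := A' * (n:ℝ) ^ (p-1) with hδndef
    have hδnpos : 0 < δn := by rw [hδndef]; positivity
    have hKL := kusmin_landau (n - T) (by omega) (fun s => φ (T + s)) δn hδnpos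
      (fun s hs => hlower (T+s) n (by omega))
      (fun s _ => hhalf (T+s) (by omega))
      (fun s _ => hmono (T+s))
    have hsplit := Finset.sum_range_add_sum_Ico
      (fun s => Complex.exp ((2 * π * (α * ((s + m : ℕ) : ℝ) ^ β
        - α * (s : ℝ) ^ β) : ℝ) * Complex.I)) (le_of_lt hcase)
    have hIco : ‖∑ s ∈ Finset.Ico T n, Complex.exp ((2 * π * (α * ((s + m : ℕ) : ℝ) ^ β
        - α * (s : ℝ) ^ β) : ℝ) * Complex.I)‖ ≤ 2/δn := by
      rw [Finset.sum_Ico_eq_sum_range]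
      exact hKL
    have hbound2 : 2/δn ≤ (2/A') * (n:ℝ) ^ ((3-β)/2) := by
      have hrpos : (0:ℝ) < (n:ℝ) ^ (1-p) := by positivity
      have hδeq : 2/δn = (2/A') * (n:ℝ) ^ (1-p) := by
        rw [hδndef, show p - 1 = -(1-p) by ring, Real.rpow_neg (by positivity : (0:ℝ) ≤ (n:ℝ))]
        field_simp
      rw [hδeq]
      apply mul_le_mul_of_nonneg_left _ (by positivity : (0:ℝ) ≤ 2/A')
      apply Real.rpow_le_rpow_of_exponent_le hn1
      rw [hpdef]; linarith
    calc ‖∑ s ∈ Finset.range n, Complex.exp ((2 * π * (α * ((s + m : ℕ) : ℝ) ^ β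
          - α * (s : ℝ) ^ β) : ℝ) * Complex.I)‖
        = ‖(∑ s ∈ Finset.range T, Complex.exp ((2 * π * (α * ((s + m : ℕ) : ℝ) ^ β
          - α * (s : ℝ) ^ β) : ℝ) * Complex.I))
          + ∑ s ∈ Finset.Ico T n, Complex.exp ((2 * π * (α * ((s + m : ℕ) : ℝ) ^ β
          - α * (s : ℝ) ^ β) : ℝ) * Complex.I)‖ := by rw [hsplit]
      _ ≤ ‖∑ s ∈ Finset.range T, Complex.exp ((2 * π * (α * ((s + m : ℕ) : ℝ) ^ β
          - α * (s : ℝ) ^ β) : ℝ) * Complex.I)‖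
          + ‖∑ s ∈ Finset.Ico T n, Complex.exp ((2 * π * (α * ((s + m : ℕ) : ℝ) ^ β
          - α * (s : ℝ) ^ β) : ℝ) * Complex.I)‖ := norm_add_le _ _
      _ ≤ (T:ℝ) + 2/δn := by
          have hfirst : ‖∑ s ∈ Finset.range T, Complex.exp ((2 * π * (α * ((s + m : ℕ) : ℝ) ^ β
              - α * (s : ℝ) ^ β) : ℝ) * Complex.I)‖ ≤ (T:ℝ) := by
            calc ‖∑ s ∈ Finset.range T, Complex.exp ((2 * π * (α * ((s + m : ℕ) : ℝ) ^ β
                - α * (s : ℝ) ^ β) : ℝ) * Complex.I)‖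
              ≤ ∑ s ∈ Finset.range T, ‖Complex.exp ((2 * π * (α * ((s + m : ℕ) : ℝ) ^ β
                - α * (s : ℝ) ^ β) : ℝ) * Complex.I)‖ := norm_sum_le _ _
              _ = (T:ℝ) := by
                  simp only [hnormone, Finset.sum_const, Finset.card_range, nsmul_eq_mul, mul_one]
          exact add_le_add hfirst hIco
      _ ≤ (T:ℝ) + (2/A') * (n:ℝ) ^ ((3-β)/2) := by linarith [hbound2]
      _ ≤ ((T:ℝ) + 2/A') * (n:ℝ) ^ ((3-β)/2) := by
          have h1 : (T:ℝ) * 1 ≤ (T:ℝ) * (n:ℝ)^((3-β)/2) :=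
            mul_le_mul_of_nonneg_left hone (Nat.cast_nonneg T)
          nlinarith

/-- Van der Corput estimate for `φ(t) = α(t+m)^β - αt^β`, `1 < β < 2`: the exponential
sums are `≲ n^{(3-β)/2} = o(n)`, hence `ξ(n) = e(αn^β)` is a Wiener sequence with
`ρ(k) = 0` for `k ≥ 1` and `ρ(0) = 1`. -/
theorem van_der_corput_beta (α β : ℝ) (hα : 0 < α) (hβ : 1 < β) (hβ2 : β < 2) :
    (∀ m : ℕ, 1 ≤ m → ∃ C : ℝ, 0 < C ∧ ∀ n : ℕ, 1 ≤ n →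
      ‖∑ s ∈ Finset.range n,
          Complex.exp ((2 * π * (α * ((s + m : ℕ) : ℝ) ^ β - α * (s : ℝ) ^ β) : ℝ) * Complex.I)‖
        ≤ C * (n : ℝ) ^ ((3 - β) / 2)) ∧
    (∀ k : ℕ, 1 ≤ k →
      Tendsto (fun n : ℕ => (n : ℂ)⁻¹ * ∑ s ∈ Finset.range n,
          Complex.exp ((2 * π * α * (s : ℝ) ^ β : ℝ) * Complex.I) *
            conj (Complex.exp ((2 * π * α * ((s + k : ℕ) : ℝ) ^ β : ℝ) * Complex.I)))
        atTop (nhds 0)) ∧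
    Tendsto (fun n : ℕ => (n : ℂ)⁻¹ * ∑ s ∈ Finset.range n,
        Complex.exp ((2 * π * α * (s : ℝ) ^ β : ℝ) * Complex.I) *
          conj (Complex.exp ((2 * π * α * (s : ℝ) ^ β : ℝ) * Complex.I)))
      atTop (nhds 1) := by
  have hconjI : ∀ r : ℝ, conj (Complex.exp ((r:ℂ) * Complex.I))
      = Complex.exp (((-r : ℝ):ℂ) * Complex.I) := by
    intro r
    rw [← Complex.exp_conj, map_mul, Complex.conj_ofReal, Complex.conj_I]
    congr 1
    push_cast
    ring
  refine ⟨fun m hm => part1 α β hα hβ hβ2 m hm, ?_, ?_⟩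
  · intro k hk
    obtain ⟨C, hC, hbound⟩ := part1 α β hα hβ hβ2 k hk
    have hterm : ∀ s : ℕ,
        Complex.exp ((2 * π * α * (s : ℝ) ^ β : ℝ) * Complex.I) *
          conj (Complex.exp ((2 * π * α * ((s + k : ℕ) : ℝ) ^ β : ℝ) * Complex.I))
        = conj (Complex.exp
            ((2 * π * (α * ((s + k : ℕ) : ℝ) ^ β - α * (s : ℝ) ^ β) : ℝ) * Complex.I)) := by
      intro s
      rw [hconjI, hconjI, ← Complex.exp_add]
      congr 1
      push_cast
      ring
    have hnorm : ∀ n : ℕ, 1 ≤ n →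
        ‖∑ s ∈ Finset.range n,
          Complex.exp ((2 * π * α * (s : ℝ) ^ β : ℝ) * Complex.I) *
            conj (Complex.exp ((2 * π * α * ((s + k : ℕ) : ℝ) ^ β : ℝ) * Complex.I))‖
          ≤ C * (n : ℝ) ^ ((3 - β) / 2) := by
      intro n hn
      have heq : ∑ s ∈ Finset.range n,
          Complex.exp ((2 * π * α * (s : ℝ) ^ β : ℝ) * Complex.I) *
            conj (Complex.exp ((2 * π * α * ((s + k : ℕ) : ℝ) ^ β : ℝ) * Complex.I))
          = conj (∑ s ∈ Finset.range n, Complex.exp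
            ((2 * π * (α * ((s + k : ℕ) : ℝ) ^ β - α * (s : ℝ) ^ β) : ℝ) * Complex.I)) := by
        rw [map_sum]
        exact Finset.sum_congr rfl fun s _ => hterm s
      rw [heq, Complex.norm_conj]
      exact hbound n hn
    apply squeeze_zero_norm' (a := fun n : ℕ => C * (n:ℝ) ^ ((1-β)/2))
    · filter_upwards [eventually_ge_atTop 1] with n hn
      have hnpos : (0:ℝ) < (n:ℝ) := by exact_mod_cast hn
      rw [norm_mul, norm_inv, Complex.norm_natCast]
      calc ((n:ℝ))⁻¹ * ‖∑ s ∈ Finset.range n,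
            Complex.exp ((2 * π * α * (s : ℝ) ^ β : ℝ) * Complex.I) *
              conj (Complex.exp ((2 * π * α * ((s + k : ℕ) : ℝ) ^ β : ℝ) * Complex.I))‖
          ≤ ((n:ℝ))⁻¹ * (C * (n : ℝ) ^ ((3 - β) / 2)) :=
            mul_le_mul_of_nonneg_left (hnorm n hn) (by positivity)
        _ = C * (n:ℝ) ^ ((1-β)/2) := by
            rw [show (1-β)/2 = (3-β)/2 - 1 by ring, Real.rpow_sub hnpos, Real.rpow_one]
            field_simp
    · have hexp : ∀ x : ℝ, x ^ ((1-β)/2) = x ^ (-((β-1)/2)) := by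
        intro x; congr 1; ring
      have htend : Tendsto (fun n : ℕ => (n:ℝ) ^ ((1-β)/2)) atTop (nhds 0) := by
        simp only [hexp]
        exact (tendsto_rpow_neg_atTop (by linarith : 0 < (β-1)/2)).comp
          tendsto_natCast_atTop_atTop
      have := htend.const_mul C
      rwa [mul_zero] at this
  · have hterm : ∀ s : ℕ,
        Complex.exp ((2 * π * α * (s : ℝ) ^ β : ℝ) * Complex.I) *
          conj (Complex.exp ((2 * π * α * (s : ℝ) ^ β : ℝ) * Complex.I)) = 1 := by
      intro s
      rw [Complex.mul_conj, Complex.normSq_eq_norm_sq, Complex.norm_exp_ofReal_mul_I]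
      norm_num
    apply Tendsto.congr' _ tendsto_const_nhds
    filter_upwards [eventually_ge_atTop 1] with n hn
    have hne : (n:ℂ) ≠ 0 := by
      simp only [ne_eq, Nat.cast_eq_zero]
      omega
    rw [Finset.sum_congr rfl fun s _ => hterm s, Finset.sum_const, Finset.card_range,
      nsmul_eq_mul, mul_one, inv_mul_cancel₀ hne]
end
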